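/- arXiv:2509.25372 — 4 statements merged into one kernel-verified Lean document; each statement's English description precedes it below -/
import Mathlib

section
/- With M, Q, and L(y) as above (M(y) = [[y₀+y₃, y₁−i·y₂],[y₁+i·y₂, y₀−y₃]], Q(y) = det(M(y)), L(y) = row span of [I₂ | M(y)] in ℂ⁴): if y ≠ y' and Q(y − y') = 0, then the subspace L(y) ∩ L(y') has dimension exactly 1. -/
open Complex

/-- The identification of complexified momentum space `ℂ⁴` with `2 × 2` complex matrices:
`M(y₀,y₁,y₂,y₃) = [[y₀+y₃, y₁−i·y₂],[y₁+i·y₂, y₀−y₃]]`. -/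
noncomputable def momentumMatrix (y : Fin 4 → ℂ) : Matrix (Fin 2) (Fin 2) ℂ :=
  !![y 0 + y 3, y 1 - Complex.I * y 2; y 1 + Complex.I * y 2, y 0 - y 3]

/-- The Lorentz quadratic form `Q(y) = y₀² − y₁² − y₂² − y₃²`. -/
def lorentzQ (y : Fin 4 → ℂ) : ℂ := y 0 ^ 2 - y 1 ^ 2 - y 2 ^ 2 - y 3 ^ 2

/-- The row span `L(y) ⊆ ℂ⁴` of the `2 × 4` matrix `[I₂ | M(y)]`. -/
noncomputable def lineOf (y : Fin 4 → ℂ) : Submodule ℂ (Fin 4 → ℂ) :=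
  Submodule.span ℂ
    {![1, 0, momentumMatrix y 0 0, momentumMatrix y 0 1],
     ![0, 1, momentumMatrix y 1 0, momentumMatrix y 1 1]}

/-- Kernel of left multiplication by a singular nonzero 2×2 matrix is spanned by one vector. -/
private lemma key (N : Matrix (Fin 2) (Fin 2) ℂ) (hdet : N.det = 0)
    (hN : N 0 0 ≠ 0 ∨ N 0 1 ≠ 0 ∨ N 1 0 ≠ 0 ∨ N 1 1 ≠ 0) :
    ∃ a b : ℂ, (a ≠ 0 ∨ b ≠ 0) ∧ a * N 0 0 + b * N 1 0 = 0 ∧ a * N 0 1 + b * N 1 1 = 0 ∧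
      ∀ a' b' : ℂ, a' * N 0 0 + b' * N 1 0 = 0 → a' * N 0 1 + b' * N 1 1 = 0 →
        ∃ c : ℂ, a' = c * a ∧ b' = c * b := by
  rw [Matrix.det_fin_two] at hdet
  rcases hN with h | h | h | h
  · refine ⟨N 1 0, -N 0 0, Or.inr (neg_ne_zero.mpr h), by ring,
      by linear_combination -hdet, ?_⟩
    intro a' b' h1 _
    exact ⟨-b' / N 0 0,
      by rw [div_mul_eq_mul_div, eq_div_iff h]; linear_combination h1,
      by rw [div_mul_eq_mul_div, eq_div_iff h]; ring⟩
  · refine ⟨N 1 1, -N 0 1, Or.inr (neg_ne_zero.mpr h), by linear_combination hdet,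
      by ring, ?_⟩
    intro a' b' _ h2
    exact ⟨-b' / N 0 1,
      by rw [div_mul_eq_mul_div, eq_div_iff h]; linear_combination h2,
      by rw [div_mul_eq_mul_div, eq_div_iff h]; ring⟩
  · refine ⟨N 1 0, -N 0 0, Or.inl h, by ring, by linear_combination -hdet, ?_⟩
    intro a' b' h1 _
    exact ⟨a' / N 1 0, (div_mul_cancel₀ a' h).symm,
      by rw [div_mul_eq_mul_div, eq_div_iff h]; linear_combination h1⟩
  · refine ⟨N 1 1, -N 0 1, Or.inl h, by linear_combination hdet, by ring, ?_⟩
    intro a' b' _ h2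
    exact ⟨a' / N 1 1, (div_mul_cancel₀ a' h).symm,
      by rw [div_mul_eq_mul_div, eq_div_iff h]; linear_combination h2⟩

/-- Well-definedness of momentum twistors: if `y ≠ y'` and `Q(y − y') = 0`, then the
intersection `L(y) ∩ L(y')` is one-dimensional, i.e. the two lines in `ℙ³` meet in a
single point. -/
theorem finrank_lineOf_inf (y y' : Fin 4 → ℂ) (hne : y ≠ y')
    (hQ : lorentzQ (y - y') = 0) :
    Module.finrank ℂ ↥(lineOf y ⊓ lineOf y') = 1 := by
  set z : Fin 4 → ℂ := y - y' with hzdef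
  set N : Matrix (Fin 2) (Fin 2) ℂ := momentumMatrix z with hNdef
  have hN00 : N 0 0 = z 0 + z 3 := by simp [hNdef, momentumMatrix]
  have hN01 : N 0 1 = z 1 - Complex.I * z 2 := by simp [hNdef, momentumMatrix]
  have hN10 : N 1 0 = z 1 + Complex.I * z 2 := by simp [hNdef, momentumMatrix]
  have hN11 : N 1 1 = z 0 - z 3 := by simp [hNdef, momentumMatrix]
  have hdet : N.det = 0 := by
    rw [Matrix.det_fin_two, hN00, hN01, hN10, hN11]
    have : lorentzQ z = 0 := hQ
    rw [lorentzQ] at this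
    linear_combination this + (z 2)^2 * Complex.I_sq
  have hzne : z ≠ 0 := sub_ne_zero.mpr hne
  have hNent : N 0 0 ≠ 0 ∨ N 0 1 ≠ 0 ∨ N 1 0 ≠ 0 ∨ N 1 1 ≠ 0 := by
    by_contra h
    push_neg at h
    obtain ⟨e1, e2, e3, e4⟩ := h
    rw [hN00] at e1; rw [hN01] at e2; rw [hN10] at e3; rw [hN11] at e4
    apply hzne
    funext i
    fin_cases i
    · show z 0 = 0; linear_combination (e1 + e4) / 2
    · show z 1 = 0; linear_combination (e2 + e3) / 2
    · show z 2 = 0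
      have h2 : (2 : ℂ) * Complex.I * z 2 = 0 := by linear_combination e3 - e2
      exact (mul_eq_zero.mp h2).resolve_left
        (mul_ne_zero two_ne_zero Complex.I_ne_zero)
    · show z 3 = 0; linear_combination (e1 - e4) / 2
  obtain ⟨a, b, hab, hk1, hk2, huniq⟩ := key N hdet hNent
  -- the rows
  set u1 : Fin 4 → ℂ := ![1, 0, momentumMatrix y 0 0, momentumMatrix y 0 1] with hu1
  set u2 : Fin 4 → ℂ := ![0, 1, momentumMatrix y 1 0, momentumMatrix y 1 1] with hu2
  set w1 : Fin 4 → ℂ := ![1, 0, momentumMatrix y' 0 0, momentumMatrix y' 0 1] with hw1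
  set w2 : Fin 4 → ℂ := ![0, 1, momentumMatrix y' 1 0, momentumMatrix y' 1 1] with hw2
  have hdiff00 : momentumMatrix y 0 0 - momentumMatrix y' 0 0 = N 0 0 := by
    rw [hN00]; simp [momentumMatrix, hzdef]; ring
  have hdiff01 : momentumMatrix y 0 1 - momentumMatrix y' 0 1 = N 0 1 := by
    rw [hN01]; simp [momentumMatrix, hzdef]; ring
  have hdiff10 : momentumMatrix y 1 0 - momentumMatrix y' 1 0 = N 1 0 := by
    rw [hN10]; simp [momentumMatrix, hzdef]; ring
  have hdiff11 : momentumMatrix y 1 1 - momentumMatrix y' 1 1 = N 1 1 := by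
    rw [hN11]; simp [momentumMatrix, hzdef]; ring
  set v : Fin 4 → ℂ := a • u1 + b • u2 with hv
  have hvval : ∀ j, v j = a * u1 j + b * u2 j := fun j => by simp [hv]
  have hveq : v = a • w1 + b • w2 := by
    funext j
    rw [hvval j]
    fin_cases j
    · simp [hu1, hu2, hw1, hw2]
    · simp [hu1, hu2, hw1, hw2]
    · show a * u1 2 + b * u2 2 = a * w1 2 + b * w2 2
      simp only [hu1, hu2, hw1, hw2, Matrix.cons_val_zero, Matrix.cons_val_one,
        Matrix.head_cons]
      show a * momentumMatrix y 0 0 + b * momentumMatrix y 1 0 =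
        a * momentumMatrix y' 0 0 + b * momentumMatrix y' 1 0
      linear_combination a * hdiff00 + b * hdiff10 + hk1
    · show a * u1 3 + b * u2 3 = a * w1 3 + b * w2 3
      show a * momentumMatrix y 0 1 + b * momentumMatrix y 1 1 =
        a * momentumMatrix y' 0 1 + b * momentumMatrix y' 1 1
      linear_combination a * hdiff01 + b * hdiff11 + hk2
  have hspan : lineOf y ⊓ lineOf y' = Submodule.span ℂ {v} := by
    apply le_antisymm
    · intro x hx
      rw [Submodule.mem_inf] at hx
      obtain ⟨hx1, hx2⟩ := hx
      simp only [lineOf] at hx1 hx2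
      rw [Submodule.mem_span_pair] at hx1 hx2
      obtain ⟨m, n, hmn⟩ := hx1
      obtain ⟨m', n', hmn'⟩ := hx2
      have hval : ∀ j, m * u1 j + n * u2 j = x j := fun j => by
        rw [← hmn]; rfl
      have hval' : ∀ j, m' * w1 j + n' * w2 j = x j := fun j => by
        rw [← hmn']; rfl
      have hm : m = m' := by
        have h1 := hval 0; have h2 := hval' 0
        simp [hu1, hu2, hw1, hw2] at h1 h2
        rw [h1, h2]
      have hn : n = n' := by
        have h1 := hval 1; have h2 := hval' 1
        simp [hu1, hu2, hw1, hw2] at h1 h2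
        rw [h1, h2]
      have hker1 : m * N 0 0 + n * N 1 0 = 0 := by
        have h1 := hval 2; have h2 := hval' 2
        rw [hm, hn] at h1
        have := h1.trans h2.symm
        simp only [hu1, hu2, hw1, hw2] at this
        show m * N 0 0 + n * N 1 0 = 0
        rw [← hdiff00, ← hdiff10, hm, hn]
        have h3 : m' * momentumMatrix y 0 0 + n' * momentumMatrix y 1 0 =
            m' * momentumMatrix y' 0 0 + n' * momentumMatrix y' 1 0 := this
        linear_combination h3
      have hker2 : m * N 0 1 + n * N 1 1 = 0 := by
        have h1 := hval 3; have h2 := hval' 3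
        rw [hm, hn] at h1
        have := h1.trans h2.symm
        simp only [hu1, hu2, hw1, hw2] at this
        rw [← hdiff01, ← hdiff11, hm, hn]
        have h3 : m' * momentumMatrix y 0 1 + n' * momentumMatrix y 1 1 =
            m' * momentumMatrix y' 0 1 + n' * momentumMatrix y' 1 1 := this
        linear_combination h3
      obtain ⟨c, hc1, hc2⟩ := huniq m n hker1 hker2
      rw [Submodule.mem_span_singleton]
      refine ⟨c, ?_⟩
      rw [← hmn, hv, hc1, hc2]
      module
    · rw [Submodule.span_singleton_le_iff_mem, Submodule.mem_inf]
      constructor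
      · simp only [lineOf]
        rw [Submodule.mem_span_pair]
        exact ⟨a, b, hv.symm⟩
      · simp only [lineOf]
        rw [Submodule.mem_span_pair]
        exact ⟨a, b, hveq.symm⟩
  rw [hspan]
  apply finrank_span_singleton
  intro hv0
  rcases hab with h | h
  · apply h
    have := congrFun hv0 0
    rw [hvval 0] at this
    simpa [hu1, hu2] using this
  · apply h
    have := congrFun hv0 1
    rw [hvval 1] at this
    simpa [hu1, hu2] using this
end

section
/- Let C ⊆ ℝⁿ be a closed convex cone that is pointed, i.e., C ∩ (−C) = {0}. Let y belong to the interior of the dual cone C* = {y ∈ ℝⁿ : ⟨x, y⟩ ≥ 0 for all x ∈ C}. Then the function x ↦ exp(−⟨x, y⟩) is integrable on C with respect to Lebesgue measure on ℝⁿ. -/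
open MeasureTheory Set

/-- Integrability of `x ↦ exp (-(c * |x|))` on `ℝ` for `c > 0`. -/
lemma integrable_exp_neg_mul_abs' {c : ℝ} (hc : 0 < c) :
    Integrable (fun x : ℝ => Real.exp (-(c * |x|))) := by
  have hIoi : IntegrableOn (fun x : ℝ => Real.exp (-(c * |x|))) (Ioi 0) := by
    refine (exp_neg_integrableOn_Ioi 0 hc).congr_fun (fun x hx => ?_) measurableSet_Ioi
    rw [abs_of_pos hx]
    ring_nf
  have hIic : IntegrableOn (fun x : ℝ => Real.exp (-(c * |x|))) (Iic 0) := by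
    rw [← Measure.map_neg_eq_self (volume : Measure ℝ)]
    have m : MeasurableEmbedding fun x : ℝ => -x := (Homeomorph.neg ℝ).measurableEmbedding
    rw [m.integrableOn_map_iff]
    simp_rw [Function.comp_def, abs_neg, neg_preimage, neg_Iic, neg_zero]
    exact Iff.mpr integrableOn_Ici_iff_integrableOn_Ioi hIoi
  have := hIic.union hIoi
  rwa [Iic_union_Ioi, integrableOn_univ] at this

/-- Convergence of the Laplace transform of a pointed closed convex cone: if
`C ⊆ ℝⁿ` is a closed convex cone with `C ∩ (−C) = {0}` and `y` lies in the interior of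
the dual cone `C* = {y : ⟨x, y⟩ ≥ 0 for all x ∈ C}`, then `x ↦ exp(−⟨x, y⟩)` is
integrable on `C`. -/
theorem integrable_exp_neg_inner_pointed_cone (n : ℕ) (C : Set (Fin n → ℝ))
    (hclosed : IsClosed C) (hconv : Convex ℝ C)
    (hcone : ∀ x ∈ C, ∀ t : ℝ, 0 ≤ t → t • x ∈ C)
    (hpointed : C ∩ (-C) = {0}) (y : Fin n → ℝ)
    (hy : y ∈ interior {y : Fin n → ℝ | ∀ x ∈ C, 0 ≤ ∑ k, x k * y k}) :
    IntegrableOn (fun x : Fin n → ℝ => Real.exp (-(∑ k, x k * y k))) C volume := by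
  -- get a ball inside the dual cone
  obtain ⟨ε, hε, hball⟩ := Metric.isOpen_iff.mp isOpen_interior y hy
  set c : ℝ := ε / 2 with hc
  have hcpos : 0 < c := by positivity
  -- key estimate: for x ∈ C, ∑ x k * y k ≥ c * ∑ |x k|
  have key : ∀ x ∈ C, c * ∑ k, |x k| ≤ ∑ k, x k * y k := by
    intro x hx
    set z : Fin n → ℝ := fun k => y k - c * (if 0 ≤ x k then 1 else -1) with hz
    have hzball : z ∈ Metric.ball y ε := by
      rw [mem_ball_iff_norm]
      have : ‖z - y‖ ≤ c := by
        refine (pi_norm_le_iff_of_nonneg hcpos.le).mpr fun k => ?_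
        simp only [hz, Pi.sub_apply]
        have : y k - c * (if 0 ≤ x k then 1 else -1) - y k
            = -(c * (if 0 ≤ x k then 1 else -1)) := by ring
        rw [this, norm_neg]
        by_cases h : 0 ≤ x k <;> simp [h, abs_of_pos hcpos, Real.norm_eq_abs]
      calc ‖z - y‖ ≤ c := this
        _ < ε := by rw [hc]; linarith
    have hzdual : ∀ x' ∈ C, 0 ≤ ∑ k, x' k * z k :=
      interior_subset (hball hzball)
    have h0 := hzdual x hx
    have hexp : ∑ k, x k * z k = (∑ k, x k * y k) - c * ∑ k, |x k| := by
      simp only [hz]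
      rw [Finset.mul_sum, ← Finset.sum_sub_distrib]
      refine Finset.sum_congr rfl fun k _ => ?_
      by_cases h : 0 ≤ x k
      · rw [abs_of_nonneg h]; simp [h]; ring
      · rw [abs_of_neg (lt_of_not_ge h)]; simp [h]; ring
    rw [hexp] at h0
    linarith
  -- dominating function
  have hdom : Integrable (fun x : Fin n → ℝ => Real.exp (-(c * ∑ k, |x k|))) volume := by
    have : (fun x : Fin n → ℝ => Real.exp (-(c * ∑ k, |x k|)))
        = fun x : Fin n → ℝ => ∏ k, Real.exp (-(c * |x k|)) := by
      funext x
      rw [← Real.exp_sum]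
      congr 1
      rw [Finset.mul_sum]
      simp
    rw [this]
    exact Integrable.fintype_prod (f := fun (_ : Fin n) (t : ℝ) => Real.exp (-(c * |t|)))
      fun _ => integrable_exp_neg_mul_abs' hcpos
  -- conclude by domination
  refine Integrable.mono' hdom.integrableOn ?_ ?_
  · exact (Continuous.aestronglyMeasurable (by continuity)).restrict
  · rw [ae_restrict_iff' hclosed.measurableSet]
    filter_upwards with x hx
    rw [Real.norm_eq_abs, Real.abs_exp]
    exact Real.exp_le_exp.mpr (neg_le_neg (key x hx))
end

section
/- Let P ⊂ ℝ^d be a full-dimensional convex polytope (the convex hull of finitely many points, with nonempty interior). Then there exist polynomials p, q ∈ ℝ[x₁,…,x_d], with q nonvanishing on the interior of P, such that for every x in the interior of P, the Lebesgue volume of the polar body (P − x)^∨ = {u ∈ ℝ^d : ⟨c − x, u⟩ ≤ 1 for all c ∈ P} equals p(x)/q(x). -/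
open MeasureTheory Set

namespace DualVolume

variable {d : ℕ}

def orth (d : ℕ) : Set (Fin d → ℝ) := {y | ∀ j, 0 ≤ y j}

lemma isClosed_orth : IsClosed (orth d) := by
  have : orth d = ⋂ j, {y : Fin d → ℝ | 0 ≤ y j} := by ext y; simp [orth]
  rw [this]
  exact isClosed_iInter fun j => isClosed_le continuous_const (continuous_apply j)

def dot (a y : Fin d → ℝ) : ℝ := ∑ k, a k * y k

def sgl (j : Fin d) : Fin d → ℝ := fun k => if j = k then 1 else 0

lemma dot_sgl (a : Fin d → ℝ) (j : Fin d) : dot a (sgl j) = a j := by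
  simp [dot, sgl, mul_ite]

lemma sgl_mem_orth (j : Fin d) : sgl j ∈ orth d := by
  intro k; unfold sgl; split <;> norm_num

lemma sgl_ne_zero (j : Fin d) : sgl j ≠ 0 := by
  intro h
  have := congrFun h j
  simp [sgl] at this

lemma dot_sub_left (a b y : Fin d → ℝ) : dot (a - b) y = dot a y - dot b y := by
  simp [dot, sub_mul, Finset.sum_sub_distrib]

lemma map_eq_sum (f : (Fin d → ℝ) →ₗ[ℝ] (Fin d → ℝ)) (y : Fin d → ℝ) :
    f y = ∑ j, y j • f (sgl j) := by
  conv_lhs => rw [pi_eq_sum_univ y]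
  rw [map_sum]
  congr 1
  funext j
  rw [LinearMap.map_smul]
  rfl

lemma dot_map (a : Fin d → ℝ) (f : (Fin d → ℝ) →ₗ[ℝ] (Fin d → ℝ)) (y : Fin d → ℝ) :
    dot a (f y) = ∑ j, dot a (f (sgl j)) * y j := by
  rw [map_eq_sum f y]
  unfold dot
  have : ∀ k, a k * (∑ j, y j • f (sgl j)) k = ∑ j, a k * (y j * f (sgl j) k) := by
    intro k
    rw [Finset.sum_apply, Finset.mul_sum]
    simp [smul_eq_mul]
  simp only [this]
  rw [Finset.sum_comm]
  congr 1
  funext j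
  rw [Finset.sum_mul]
  congr 1
  funext k
  ring


/-! ### Shear and diagonal linear equivalences -/

def shearMap (i j : Fin d) (c : ℝ) : (Fin d → ℝ) →ₗ[ℝ] (Fin d → ℝ) where
  toFun y := fun k => y k + (if k = i then c * y j else 0)
  map_add' y z := by
    funext k
    by_cases h : k = i <;> simp [h] <;> ring
  map_smul' r y := by
    funext k
    by_cases h : k = i <;> simp [h, smul_eq_mul] <;> ring

lemma shearMap_apply (i j : Fin d) (c : ℝ) (y : Fin d → ℝ) (k : Fin d) :
    shearMap i j c y k = y k + (if k = i then c * y j else 0) := rfl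

noncomputable def shear (i j : Fin d) (h : j ≠ i) (c : ℝ) : (Fin d → ℝ) ≃ₗ[ℝ] (Fin d → ℝ) :=
  LinearEquiv.ofLinear (shearMap i j c) (shearMap i j (-c))
    (by
      refine LinearMap.ext fun y => funext fun k => ?_
      simp only [LinearMap.comp_apply, shearMap_apply, LinearMap.id_apply, if_neg h]
      by_cases hk : k = i <;> simp [hk, if_neg h] <;> ring)
    (by
      refine LinearMap.ext fun y => funext fun k => ?_
      simp only [LinearMap.comp_apply, shearMap_apply, LinearMap.id_apply, if_neg h]
      by_cases hk : k = i <;> simp [hk, if_neg h] <;> ring)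

lemma shear_apply (i j : Fin d) (h : j ≠ i) (c : ℝ) (y : Fin d → ℝ) (k : Fin d) :
    shear i j h c y k = y k + (if k = i then c * y j else 0) := rfl

lemma shear_symm_apply (i j : Fin d) (h : j ≠ i) (c : ℝ) (y : Fin d → ℝ) (k : Fin d) :
    (shear i j h c).symm y k = y k + (if k = i then -c * y j else 0) := rfl

def diagMap (t : Fin d → ℝ) : (Fin d → ℝ) →ₗ[ℝ] (Fin d → ℝ) where
  toFun y := fun k => t k * y k
  map_add' y z := by funext k; simp; ring
  map_smul' r y := by funext k; simp [smul_eq_mul]; ring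

noncomputable def diagEquiv (t : Fin d → ℝ) (ht : ∀ k, t k ≠ 0) : (Fin d → ℝ) ≃ₗ[ℝ] (Fin d → ℝ) :=
  LinearEquiv.ofLinear (diagMap t) (diagMap fun k => (t k)⁻¹)
    (by
      refine LinearMap.ext fun y => funext fun k => ?_
      simp only [LinearMap.comp_apply, LinearMap.id_apply]
      show t k * ((t k)⁻¹ * y k) = y k
      rw [← mul_assoc, mul_inv_cancel₀ (ht k), one_mul])
    (by
      refine LinearMap.ext fun y => funext fun k => ?_
      simp only [LinearMap.comp_apply, LinearMap.id_apply]
      show (t k)⁻¹ * (t k * y k) = y k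
      rw [← mul_assoc, inv_mul_cancel₀ (ht k), one_mul])

lemma diagEquiv_apply (t : Fin d → ℝ) (ht : ∀ k, t k ≠ 0) (y : Fin d → ℝ) (k : Fin d) :
    diagEquiv t ht y k = t k * y k := rfl

lemma det_diagMap (t : Fin d → ℝ) : LinearMap.det (diagMap t) = ∏ k, t k := by
  have : diagMap t = Matrix.toLin' (Matrix.diagonal t) := by
    refine LinearMap.ext fun y => funext fun k => ?_
    rw [Matrix.toLin'_apply, Matrix.mulVec_diagonal]
    rfl
  rw [this, LinearMap.det_toLin', Matrix.det_diagonal]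

/-! ### measure lemmas -/

lemma vol_image (f : (Fin d → ℝ) ≃ₗ[ℝ] (Fin d → ℝ)) (s : Set (Fin d → ℝ)) :
    volume (⇑f '' s) = ENNReal.ofReal |LinearMap.det (f : (Fin d → ℝ) →ₗ[ℝ] (Fin d → ℝ))| * volume s := by
  have := Measure.addHaar_image_linearMap (volume : Measure (Fin d → ℝ))
    (f : (Fin d → ℝ) →ₗ[ℝ] (Fin d → ℝ)) s
  simpa using this

lemma null_image (f : (Fin d → ℝ) ≃ₗ[ℝ] (Fin d → ℝ)) {s : Set (Fin d → ℝ)}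
    (hs : volume s = 0) : volume (⇑f '' s) = 0 := by
  rw [vol_image, hs, mul_zero]

def dotL (a : Fin d → ℝ) : (Fin d → ℝ) →ₗ[ℝ] ℝ where
  toFun y := dot a y
  map_add' y z := by simp [dot, mul_add, Finset.sum_add_distrib]
  map_smul' r y := by
    simp [dot, smul_eq_mul, Finset.mul_sum]
    try (congr 1; funext k; ring)

lemma null_hyperplane (a : Fin d → ℝ) (ha : a ≠ 0) :
    volume {y : Fin d → ℝ | dot a y = 0} = 0 := by
  have hset : {y : Fin d → ℝ | dot a y = 0} = (LinearMap.ker (dotL a) : Set (Fin d → ℝ)) := by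
    ext y; simp only [LinearMap.mem_ker, dotL, LinearMap.coe_mk, AddHom.coe_mk, mem_setOf_eq,
      SetLike.mem_coe]; rfl
  rw [hset]
  refine Measure.addHaar_submodule _ _ ?_
  intro htop
  obtain ⟨k, hk⟩ : ∃ k, a k ≠ 0 := by
    by_contra h
    push_neg at h
    exact ha (funext h)
  have : sgl k ∈ LinearMap.ker (dotL a) := htop ▸ Submodule.mem_top
  rw [LinearMap.mem_ker] at this
  have : dot a (sgl k) = 0 := this
  rw [dot_sgl] at this
  exact hk this


/-! ### shear geometry -/

lemma dot_shear (b : Fin d → ℝ) (i j : Fin d) (h : j ≠ i) (c : ℝ) (y : Fin d → ℝ) :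
    dot b (shear i j h c y) = dot b y + b i * (c * y j) := by
  unfold dot
  have : ∀ k, b k * shear i j h c y k = b k * y k + (if k = i then b k * (c * y j) else 0) := by
    intro k
    rw [shear_apply]
    by_cases hk : k = i <;> simp [hk] <;> ring
  simp only [this, Finset.sum_add_distrib, Finset.sum_ite_eq' Finset.univ i, Finset.mem_univ,
    if_true]

lemma dot_update_zero (b y : Fin d → ℝ) (i : Fin d) :
    dot (Function.update b i 0) y = dot b y - b i * y i := by
  unfold dot
  have : ∀ k, Function.update b i 0 k * y k = b k * y k - (if k = i then b i * y i else 0) := by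
    intro k
    by_cases hk : k = i <;> simp [hk, Function.update]
  simp only [this, Finset.sum_sub_distrib, Finset.sum_ite_eq' Finset.univ i, Finset.mem_univ,
    if_true]

/-- the shear with coefficient `-q/p` maps the orthant onto the part of the orthant where
`p * y i + q * y j ≥ 0`, provided `p > 0 ≥ q`. -/
lemma shear_image_orth {i j : Fin d} (h : j ≠ i) {p q : ℝ} (hp : 0 < p) (hq : q ≤ 0) :
    ⇑(shear i j h (-q / p)) '' orth d = orth d ∩ {y | 0 ≤ p * y i + q * y j} := by
  have hc : 0 ≤ -q / p := div_nonneg (by linarith) hp.le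
  ext y
  constructor
  · rintro ⟨g, hg, rfl⟩
    constructor
    · intro k
      rw [shear_apply]
      by_cases hk : k = i
      · simp only [hk, if_pos rfl]
        have := mul_nonneg hc (hg j)
        have := hg i
        positivity
      · simpa [hk] using hg k
    · show 0 ≤ p * shear i j h (-q / p) g i + q * shear i j h (-q / p) g j
      rw [shear_apply, shear_apply, if_pos rfl, if_neg h]
      have : p * (g i + -q / p * g j) + q * (g j + 0) = p * g i := by field_simp; ring
      rw [this]
      exact mul_nonneg hp.le (hg i)
  · rintro ⟨hy, hy2⟩
    refine ⟨(shear i j h (-q / p)).symm y, ?_, by simp⟩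
    intro k
    rw [shear_symm_apply]
    by_cases hk : k = i
    · simp only [hk, if_pos rfl, if_true]
      have : y i + -(-q / p) * y j = (p * y i + q * y j) / p := by
        field_simp
      rw [this]
      exact div_nonneg hy2 hp.le
    · simpa [hk] using hy k


/-! ### dot linearity in first argument -/

lemma cancel_helper {p q y : ℝ} (hp : p ≠ 0) : p * (-q / p * y) = -(q * y) := by
  field_simp

lemma trans_image (e f : (Fin d → ℝ) ≃ₗ[ℝ] (Fin d → ℝ)) (s : Set (Fin d → ℝ)) :
    ⇑(e.trans f) '' s = ⇑f '' (⇑e '' s) := by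
  rw [← image_comp]; rfl

lemma dot_add_left (a b y : Fin d → ℝ) : dot (a + b) y = dot a y + dot b y := by
  simp [dot, add_mul, Finset.sum_add_distrib]

lemma dot_smul_left (c : ℝ) (a y : Fin d → ℝ) : dot (c • a) y = c * dot a y := by
  simp [dot, Finset.mul_sum]
  congr 1; funext k; ring

lemma dot_sgl_left (k : Fin d) (y : Fin d → ℝ) : dot (sgl k) y = y k := by
  simp [dot, sgl, ite_mul]

lemma null_pairplane {i₁ i₂ : Fin d} (hne : i₂ ≠ i₁) {p : ℝ} (hp : p ≠ 0) (q : ℝ) :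
    volume {y : Fin d → ℝ | p * y i₁ + q * y i₂ = 0} = 0 := by
  set a : Fin d → ℝ := p • sgl i₁ + q • sgl i₂ with ha
  have hay : ∀ y, dot a y = p * y i₁ + q * y i₂ := by
    intro y
    rw [ha, dot_add_left, dot_smul_left, dot_smul_left, dot_sgl_left, dot_sgl_left]
  have hane : a ≠ 0 := by
    intro h0
    have := congrFun h0 i₁
    simp [ha, sgl, if_neg hne, Pi.add_apply] at this
    exact hp this
  have := null_hyperplane a hane
  have hset : {y : Fin d → ℝ | p * y i₁ + q * y i₂ = 0} = {y : Fin d → ℝ | dot a y = 0} := by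
    ext y; simp [hay]
  rw [hset]
  exact this

/-! ### The sign decomposition of the orthant (Lemma B) -/

/-- conclusion predicate of the sign decomposition -/
def SignDecomp (b : Fin d → ℝ) : Prop :=
  ∃ (ι : Type) (_ : Fintype ι) (E : ι → ((Fin d → ℝ) ≃ₗ[ℝ] (Fin d → ℝ))),
    (∀ i, ⇑(E i) '' orth d ⊆ orth d) ∧
    volume (orth d \ ⋃ i, ⇑(E i) '' orth d) = 0 ∧
    (∀ i j, i ≠ j → volume ((⇑(E i) '' orth d) ∩ (⇑(E j) '' orth d)) = 0) ∧
    (∀ i, (∀ y ∈ orth d, 0 ≤ dot b (E i y)) ∨ (∀ y ∈ orth d, dot b (E i y) ≤ 0))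

lemma trivial_decomp (b : Fin d → ℝ) (hb : (∀ k, 0 ≤ b k) ∨ ∀ k, b k ≤ 0) :
    SignDecomp b := by
  refine ⟨PUnit, inferInstance, fun _ => LinearEquiv.refl ℝ _, ?_, ?_, ?_, ?_⟩
  · intro i
    rw [show ⇑(LinearEquiv.refl ℝ (Fin d → ℝ)) = id from rfl, image_id]
  · have : (⋃ _ : PUnit, ⇑(LinearEquiv.refl ℝ (Fin d → ℝ)) '' orth d) = orth d := by
      rw [show ⇑(LinearEquiv.refl ℝ (Fin d → ℝ)) = id from rfl, image_id]
      exact iUnion_const _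
    rw [this, diff_self]
    exact measure_empty
  · intro i j hij
    exact absurd (Subsingleton.elim i j) hij
  · intro i
    rcases hb with hb | hb
    · left
      intro y hy
      exact Finset.sum_nonneg fun k _ => mul_nonneg (hb k) (hy k)
    · right
      intro y hy
      exact Finset.sum_nonpos fun k _ => mul_nonpos_of_nonpos_of_nonneg (hb k) (hy k)

theorem signDecompAux (N : ℕ) : ∀ b : Fin d → ℝ,
    (Finset.univ.filter fun j => b j ≠ 0).card ≤ N → SignDecomp b := by
  induction N with
  | zero =>
    intro b hb
    refine trivial_decomp b (Or.inl fun k => ?_)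
    by_contra hk
    have hk' : b k ≠ 0 := by intro h; rw [h] at hk; exact hk le_rfl
    have : k ∈ Finset.univ.filter fun j => b j ≠ 0 := by simp [hk']
    have := Finset.card_pos.mpr ⟨k, this⟩
    omega
  | succ N ih =>
    intro b hb
    by_cases hsplit : (∃ i, 0 < b i) ∧ ∃ j, b j < 0
    · obtain ⟨⟨i₁, h₁⟩, ⟨i₂, h₂⟩⟩ := hsplit
      have hne : i₂ ≠ i₁ := by intro h; rw [h] at h₂; linarith
      have hne' : i₁ ≠ i₂ := hne.symm
      -- the two shears
      set ΦA := shear i₁ i₂ hne (-b i₂ / b i₁) with hΦA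
      set ΦB := shear i₂ i₁ hne' (-(-b i₁) / (-b i₂)) with hΦB
      have hA : ⇑ΦA '' orth d = orth d ∩ {y | 0 ≤ b i₁ * y i₁ + b i₂ * y i₂} :=
        shear_image_orth hne h₁ h₂.le
      have hB : ⇑ΦB '' orth d = orth d ∩ {y | 0 ≤ (-b i₂) * y i₂ + (-b i₁) * y i₁} :=
        shear_image_orth hne' (by linarith) (by linarith)
      -- the reduced vectors
      set b' := Function.update b i₂ 0 with hb'
      set b'' := Function.update b i₁ 0 with hb''
      have dotA : ∀ y, dot b (ΦA y) = dot b' y := by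
        intro y
        rw [hΦA, dot_shear, hb', dot_update_zero, cancel_helper (ne_of_gt h₁)]
        ring
      have dotB : ∀ y, dot b (ΦB y) = dot b'' y := by
        intro y
        rw [hΦB, dot_shear, hb'', dot_update_zero]
        have hcc : b i₂ * (- -b i₁ / -b i₂ * y i₁) = -(- -b i₁ * y i₁) := by
          have h0 : (-b i₂) ≠ 0 := by intro h; apply ne_of_lt h₂; linarith
          have := cancel_helper (p := -b i₂) (q := -b i₁) (y := y i₁) h0
          linarith [this]
        rw [hcc]; ring
      -- cardinalities decrease
      have cardb : ∀ (i : Fin d), b i ≠ 0 →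
          ((Finset.univ.filter fun j => Function.update b i 0 j ≠ 0).card ≤ N) := by
        intro i hi
        have hsub : (Finset.univ.filter fun j => Function.update b i 0 j ≠ 0)
            ⊆ (Finset.univ.filter fun j => b j ≠ 0).erase i := by
          intro k hk
          rw [Finset.mem_filter] at hk
          obtain ⟨-, hk⟩ := hk
          have hki : k ≠ i := by
            intro h
            rw [h, Function.update_self] at hk
            exact hk rfl
          rw [Function.update_of_ne hki] at hk
          exact Finset.mem_erase.mpr ⟨hki, by simp [hk]⟩
        have hmem : i ∈ Finset.univ.filter fun j => b j ≠ 0 := by simp [hi]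
        have := Finset.card_le_card hsub
        rw [Finset.card_erase_of_mem hmem] at this
        omega
      obtain ⟨ι₁, hι₁, E₁, hsub₁, hcov₁, hdisj₁, hsign₁⟩ := ih b' (cardb i₂ (ne_of_lt h₂))
      obtain ⟨ι₂, hι₂, E₂, hsub₂, hcov₂, hdisj₂, hsign₂⟩ := ih b'' (cardb i₁ (ne_of_gt h₁))
      haveI := hι₁; haveI := hι₂
      refine ⟨ι₁ ⊕ ι₂, inferInstance,
        Sum.elim (fun i => (E₁ i).trans ΦA) (fun i => (E₂ i).trans ΦB), ?_, ?_, ?_, ?_⟩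
      · rintro (i | i) <;> simp only [Sum.elim_inl, Sum.elim_inr]
        · rw [trans_image]
          exact (image_mono (hsub₁ i)).trans (hA ▸ inter_subset_left)
        · rw [trans_image]
          exact (image_mono (hsub₂ i)).trans (hB ▸ inter_subset_left)
      · refine measure_mono_null ?_
          (measure_union_null (null_image ΦA hcov₁) (null_image ΦB hcov₂))
        rintro y ⟨hy1, hy2⟩
        by_cases hs : 0 ≤ b i₁ * y i₁ + b i₂ * y i₂
        · have : y ∈ ⇑ΦA '' orth d := hA ▸ ⟨hy1, hs⟩
          obtain ⟨z, hz, rfl⟩ := this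
          left
          refine mem_image_of_mem _ ⟨hz, fun hz' => ?_⟩
          rw [mem_iUnion] at hz'
          obtain ⟨i, hi⟩ := hz'
          apply hy2
          rw [mem_iUnion]
          refine ⟨Sum.inl i, ?_⟩
          rw [Sum.elim_inl, trans_image]
          exact mem_image_of_mem _ hi
        · have hs' : 0 ≤ -b i₂ * y i₂ + -b i₁ * y i₁ := by
            push_neg at hs; linarith
          have : y ∈ ⇑ΦB '' orth d := hB ▸ ⟨hy1, hs'⟩
          obtain ⟨z, hz, rfl⟩ := this
          right
          refine mem_image_of_mem _ ⟨hz, fun hz' => ?_⟩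
          rw [mem_iUnion] at hz'
          obtain ⟨i, hi⟩ := hz'
          apply hy2
          rw [mem_iUnion]
          refine ⟨Sum.inr i, ?_⟩
          rw [Sum.elim_inr, trans_image]
          exact mem_image_of_mem _ hi
      · have subA : ∀ i, ⇑((E₁ i).trans ΦA) '' orth d ⊆ {y | 0 ≤ b i₁ * y i₁ + b i₂ * y i₂} := by
          intro i
          rw [trans_image]
          refine ((image_mono (hsub₁ i)).trans ?_)
          rw [hA]; exact inter_subset_right
        have subB : ∀ i, ⇑((E₂ i).trans ΦB) '' orth d ⊆ {y | 0 ≤ -b i₂ * y i₂ + -b i₁ * y i₁} := by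
          intro i
          rw [trans_image]
          refine ((image_mono (hsub₂ i)).trans ?_)
          rw [hB]; exact inter_subset_right
        have hplane := null_pairplane hne (ne_of_gt h₁) (b i₂)
        rintro (i | i) (j | j) hij <;> simp only [Sum.elim_inl, Sum.elim_inr]
        · rw [trans_image, trans_image, ← image_inter ΦA.injective]
          exact null_image ΦA (hdisj₁ i j (fun h => hij (by rw [h])))
        · refine measure_mono_null ?_ hplane
          rintro y ⟨hyA, hyB⟩
          have h1 := subA i hyA
          have h2 := subB j hyB
          simp only [mem_setOf_eq] at h1 h2 ⊢
          linarith
        · refine measure_mono_null ?_ hplane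
          rintro y ⟨hyB, hyA⟩
          have h1 := subA j hyA
          have h2 := subB i hyB
          simp only [mem_setOf_eq] at h1 h2 ⊢
          linarith
        · rw [trans_image, trans_image, ← image_inter ΦB.injective]
          exact null_image ΦB (hdisj₂ i j (fun h => hij (by rw [h])))
      · rintro (i | i)
        · rcases hsign₁ i with h | h
          · left; intro y hy
            simpa only [Sum.elim_inl, LinearEquiv.trans_apply, dotA] using h y hy
          · right; intro y hy
            simpa only [Sum.elim_inl, LinearEquiv.trans_apply, dotA] using h y hy
        · rcases hsign₂ i with h | h
          · left; intro y hy
            simpa only [Sum.elim_inr, LinearEquiv.trans_apply, dotB] using h y hy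
          · right; intro y hy
            simpa only [Sum.elim_inr, LinearEquiv.trans_apply, dotB] using h y hy
    · rw [not_and_or] at hsplit
      refine trivial_decomp b ?_
      rcases hsplit with h | h
      · push_neg at h
        right; exact fun k => h k
      · push_neg at h
        left; exact fun k => h k


theorem signDecomp (b : Fin d → ℝ) : SignDecomp b :=
  signDecompAux (Finset.univ.filter fun j => b j ≠ 0).card b le_rfl

/-! ### Decomposition of all of `ℝ^d` (Lemma C) -/

def FanDecomp (B : Finset (Fin d → ℝ)) : Prop :=
  ∃ (ι : Type) (_ : Fintype ι) (E : ι → ((Fin d → ℝ) ≃ₗ[ℝ] (Fin d → ℝ))),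
    volume (univ \ ⋃ i, ⇑(E i) '' orth d) = 0 ∧
    (∀ i j, i ≠ j → volume ((⇑(E i) '' orth d) ∩ (⇑(E j) '' orth d)) = 0) ∧
    (∀ b ∈ B, ∀ i, (∀ y ∈ orth d, 0 ≤ dot b (E i y)) ∨ (∀ y ∈ orth d, dot b (E i y) ≤ 0))

theorem fanDecomp (B : Finset (Fin d → ℝ)) : FanDecomp B := by
  classical
  induction B using Finset.induction_on with
  | empty =>
    -- the 2^d sign orthants
    set t : (Fin d → Bool) → (Fin d → ℝ) := fun s k => if s k then 1 else -1 with ht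
    have htne : ∀ s k, t s k ≠ 0 := by
      intro s k; rw [ht]; dsimp only; split <;> norm_num
    have htsq : ∀ s k, t s k * t s k = 1 := by
      intro s k; rw [ht]; dsimp only; split <;> norm_num
    set Es : (Fin d → Bool) → ((Fin d → ℝ) ≃ₗ[ℝ] (Fin d → ℝ)) :=
      fun s => diagEquiv (t s) (htne s) with hEs
    have sign_mem : ∀ s y, y ∈ ⇑(Es s) '' orth d → ∀ k,
        if s k then 0 ≤ y k else y k ≤ 0 := by
      rintro s y ⟨z, hz, rfl⟩ k
      rw [hEs]
      have : diagEquiv (t s) (htne s) z k = t s k * z k := rfl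
      rw [this, ht]
      dsimp only
      split
      · simpa using hz k
      · have := hz k; simp; linarith
    refine ⟨Fin d → Bool, inferInstance, Es, ?_, ?_, ?_⟩
    · have huniv : (univ : Set (Fin d → ℝ)) ⊆ ⋃ s, ⇑(Es s) '' orth d := by
        intro y _
        rw [mem_iUnion]
        set s₀ : Fin d → Bool := fun k => decide (0 ≤ y k) with hs₀
        refine ⟨s₀, ⟨fun k => t s₀ k * y k, ?_, ?_⟩⟩
        · intro k
          rw [ht, hs₀]; dsimp only
          by_cases h : 0 ≤ y k <;> simp [h] <;> linarith
        · funext k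
          have : Es s₀ (fun k => t s₀ k * y k) k = t s₀ k * (t s₀ k * y k) := rfl
          rw [this, ← mul_assoc, htsq, one_mul]
      rw [diff_eq_empty.mpr huniv]
      exact measure_empty
    · intro s s' hss
      obtain ⟨k, hk⟩ : ∃ k, s k ≠ s' k := by
        by_contra h; push_neg at h; exact hss (funext h)
      refine measure_mono_null ?_ (null_hyperplane (sgl k) (sgl_ne_zero k))
      rintro y ⟨hy1, hy2⟩
      have h1 := sign_mem s y hy1 k
      have h2 := sign_mem s' y hy2 k
      show dot (sgl k) y = 0
      rw [dot_sgl_left]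
      cases hsk : s k <;> cases hsk' : s' k <;> rw [hsk] at h1 <;> rw [hsk'] at h2 <;>
        simp at h1 h2 ⊢ <;> first
          | (exact absurd rfl (hsk ▸ hsk' ▸ hk))
          | linarith
    · intro b hb
      exact absurd hb (Finset.notMem_empty b)
  | @insert b B' hbB ih =>
    obtain ⟨ι, hι, E, hcov, hdisj, hsign⟩ := ih
    haveI := hι
    have h : ∀ i : ι, SignDecomp (fun k => dot b (E i (sgl k))) := fun i => signDecomp _
    choose ι' hι' F hF1 hF2 hF3 hF4 using h
    haveI := fun i => hι' i
    refine ⟨Σ i : ι, ι' i, inferInstance, fun p => (F p.1 p.2).trans (E p.1), ?_, ?_, ?_⟩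
    · refine measure_mono_null ?_ (measure_union_null hcov
        (measure_iUnion_null fun i => null_image (E i) (hF2 i)))
      rintro y ⟨-, hyn⟩
      by_cases hy : y ∈ ⋃ i, ⇑(E i) '' orth d
      · right
        rw [mem_iUnion] at hy
        obtain ⟨i, z, hz, rfl⟩ := hy
        rw [mem_iUnion]
        refine ⟨i, mem_image_of_mem _ ⟨hz, fun h' => ?_⟩⟩
        rw [mem_iUnion] at h'
        obtain ⟨j, hj⟩ := h'
        apply hyn
        rw [mem_iUnion]
        refine ⟨⟨i, j⟩, ?_⟩
        rw [trans_image]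
        exact mem_image_of_mem _ hj
      · exact Or.inl ⟨trivial, hy⟩
    · rintro ⟨i, j⟩ ⟨i', j'⟩ hne
      by_cases hii : i = i'
      · subst hii
        have hjj : j ≠ j' := by
          intro h; exact hne (by rw [h])
        rw [trans_image, trans_image, ← image_inter (E i).injective]
        exact null_image (E i) (hF3 i j j' hjj)
      · refine measure_mono_null ?_ (hdisj i i' hii)
        rw [trans_image, trans_image]
        exact inter_subset_inter (image_mono (hF1 i j)) (image_mono (hF1 i' j'))
    · intro c hc p
      obtain ⟨i, j⟩ := p
      rcases Finset.mem_insert.mp hc with rfl | hc'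
      · have key : ∀ z, dot c (E i z) = dot (fun k => dot c (E i (sgl k))) z := by
          intro z
          rw [show E i z = (E i : (Fin d → ℝ) →ₗ[ℝ] (Fin d → ℝ)) z from rfl, dot_map]
          rfl
        rcases hF4 i j with hs | hs
        · left
          intro y hy
          rw [LinearEquiv.trans_apply, key]
          exact hs y hy
        · right
          intro y hy
          rw [LinearEquiv.trans_apply, key]
          exact hs y hy
      · have hmem : ∀ y ∈ orth d, F i j y ∈ orth d := by
          intro y hy
          exact hF1 i j (mem_image_of_mem _ hy)
        rcases hsign c hc' i with hs | hs
        · left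
          intro y hy
          rw [LinearEquiv.trans_apply]
          exact hs _ (hmem y hy)
        · right
          intro y hy
          rw [LinearEquiv.trans_apply]
          exact hs _ (hmem y hy)


/-! ### maximum for a total preorder on a finite set -/

lemma exists_max_rel {α : Type*} (r : α → α → Prop) (hrefl : ∀ a, r a a)
    (htrans : ∀ a b c, r a b → r b c → r a c) :
    ∀ (s : Finset α), s.Nonempty → (∀ a ∈ s, ∀ b ∈ s, r a b ∨ r b a) →
      ∃ a ∈ s, ∀ b ∈ s, r a b := by
  classical
  intro s
  induction s using Finset.cons_induction with
  | empty =>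
    intro hs _
    exact absurd hs (by simp)
  | @cons a t ha ih =>
    intro _ htotal
    by_cases htne : t.Nonempty
    · obtain ⟨m, hm, hmax⟩ := ih htne fun x hx y hy =>
        htotal x (Finset.mem_cons_of_mem hx) y (Finset.mem_cons_of_mem hy)
      rcases htotal a (Finset.mem_cons_self a t) m (Finset.mem_cons_of_mem hm) with ham | hma
      · refine ⟨a, Finset.mem_cons_self a t, fun b hb => ?_⟩
        rcases Finset.mem_cons.mp hb with hba | hb'
        · rw [hba]; exact hrefl a
        · exact htrans a m b ham (hmax b hb')
      · refine ⟨m, Finset.mem_cons_of_mem hm, fun b hb => ?_⟩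
        rcases Finset.mem_cons.mp hb with hba | hb'
        · rw [hba]; exact hma
        · exact hmax b hb'
    · rw [Finset.not_nonempty_iff_eq_empty] at htne
      subst htne
      refine ⟨a, Finset.mem_cons_self a ∅, fun b hb => ?_⟩
      rcases Finset.mem_cons.mp hb with hba | hb'
      · rw [hba]; exact hrefl a
      · exact absurd hb' (Finset.notMem_empty b)


/-! ### halfspaces and convex hulls -/

lemma hull_le_halfspace (V : Finset (Fin d → ℝ)) (u : Fin d → ℝ) (M : ℝ)
    (hw : ∀ w ∈ V, dot w u ≤ M) :
    ∀ c ∈ convexHull ℝ (V : Set (Fin d → ℝ)), dot c u ≤ M := by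
  have hlin : IsLinearMap ℝ (fun z : Fin d → ℝ => dot z u) :=
    ⟨fun a b => dot_add_left a b u, fun c a => dot_smul_left c a u⟩
  have hconv : Convex ℝ {z : Fin d → ℝ | dot z u ≤ M} := convex_halfSpace_le hlin M
  intro c hc
  exact convexHull_min (fun w hwV => hw w hwV) hconv hc

lemma dot_self_pos {u : Fin d → ℝ} (hu : u ≠ 0) : 0 < dot u u := by
  obtain ⟨k, hk⟩ : ∃ k, u k ≠ 0 := by
    by_contra h; push_neg at h; exact hu (funext h)
  exact Finset.sum_pos' (fun m _ => mul_self_nonneg (u m))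
    ⟨k, Finset.mem_univ k, mul_self_pos.mpr hk⟩

end DualVolume

open DualVolume MvPolynomial in
/-- The dual volume function of a full-dimensional convex polytope `P ⊂ ℝ^d` is a
rational function on the interior of `P`: there are polynomials `p, q`, with `q`
nonvanishing on the interior of `P`, such that for every `x` in the interior of `P`,
the Lebesgue volume of the polar body `(P − x)^∨ = {u : ⟨c − x, u⟩ ≤ 1 for all c ∈ P}`
equals `p(x)/q(x)`.  This rational function is the canonical form of `P`. -/
theorem dual_volume_function_rational (d : ℕ) (V : Finset (Fin d → ℝ))
    (P : Set (Fin d → ℝ)) (hP : P = convexHull ℝ (V : Set (Fin d → ℝ)))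
    (hfull : (interior P).Nonempty) :
    ∃ p q : MvPolynomial (Fin d) ℝ,
      (∀ x ∈ interior P, MvPolynomial.eval x q ≠ 0) ∧
      ∀ x ∈ interior P,
        volume {u : Fin d → ℝ | ∀ c ∈ P, ∑ k, (c k - x k) * u k ≤ 1} =
          ENNReal.ofReal (MvPolynomial.eval x p / MvPolynomial.eval x q) := by
  classical
  subst hP
  set P := convexHull ℝ (V : Set (Fin d → ℝ)) with hPdef
  -- V is nonempty
  have hVne : V.Nonempty := by
    rcases hfull with ⟨x, hx⟩
    by_contra h
    rw [Finset.not_nonempty_iff_eq_empty] at h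
    rw [hPdef, h] at hx
    simp only [Finset.coe_empty, convexHull_empty, interior_empty] at hx
    exact absurd hx (notMem_empty x)
  -- fan decomposition subordinate to all difference hyperplanes
  obtain ⟨ι, hι, E, hcov, hdisj, hsign⟩ := fanDecomp ((V ×ˢ V).image fun pr => pr.1 - pr.2)
  haveI := hι
  -- argmax vertex on each cone
  have hargmax : ∀ i : ι, ∃ v ∈ V, ∀ w ∈ V, ∀ y ∈ orth d, dot w (E i y) ≤ dot v (E i y) := by
    intro i
    refine exists_max_rel (fun v w => ∀ y ∈ orth d, dot w (E i y) ≤ dot v (E i y))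
      (fun a y hy => le_rfl) (fun a b c hab hbc y hy => (hbc y hy).trans (hab y hy))
      V hVne ?_
    intro a ha b hb
    have hmem : a - b ∈ (V ×ˢ V).image fun pr => pr.1 - pr.2 :=
      Finset.mem_image.mpr ⟨(a, b), Finset.mem_product.mpr ⟨ha, hb⟩, rfl⟩
    rcases hsign _ hmem i with h | h
    · left
      intro y hy
      have := h y hy
      rw [dot_sub_left] at this
      linarith
    · right
      intro y hy
      have := h y hy
      rw [dot_sub_left] at this
      linarith
  choose v hvV hvmax using hargmax
  -- generators of the cones
  set w : ι → Fin d → (Fin d → ℝ) := fun i j => E i (sgl j) with hwdef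
  -- linear polynomials
  set L : ι → Fin d → MvPolynomial (Fin d) ℝ := fun i j =>
    MvPolynomial.C (dot (v i) (w i j)) - ∑ k, MvPolynomial.C (w i j k) * MvPolynomial.X k
    with hLdef
  have hLeval : ∀ (x : Fin d → ℝ) i j,
      MvPolynomial.eval x (L i j) = dot (v i - x) (w i j) := by
    intro x i j
    rw [dot_sub_left, hLdef]
    simp only [map_sub, map_sum, map_mul, eval_C, eval_X]
    congr 1
    unfold dot
    congr 1
    funext k
    ring
  -- positivity of the linear forms on the interior
  have hLpos : ∀ x ∈ interior P, ∀ (i : ι) (j : Fin d),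
      0 < MvPolynomial.eval x (L i j) := by
    intro x hx i j
    rw [hLeval]
    set u : Fin d → ℝ := w i j with hudef
    have hu0 : u ≠ 0 := by
      intro h
      exact sgl_ne_zero j ((LinearEquiv.map_eq_zero_iff (E i)).mp h)
    obtain ⟨ε, hε, hball⟩ : ∃ ε > 0, Metric.ball x ε ⊆ P := by
      rw [mem_interior_iff_mem_nhds] at hx
      exact Metric.mem_nhds_iff.mp hx
    set δ : ℝ := ε / (2 * (‖u‖ + 1)) with hδdef
    have hδ : 0 < δ := by positivity
    have hcball : x + δ • u ∈ Metric.ball x ε := by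
      rw [Metric.mem_ball, dist_eq_norm, add_sub_cancel_left, norm_smul,
        Real.norm_eq_abs, abs_of_pos hδ]
      have hmul : δ * (2 * (‖u‖ + 1)) = ε := by
        rw [hδdef]; field_simp
      nlinarith [norm_nonneg u]
    have hcP : x + δ • u ∈ P := hball hcball
    have hbound : dot (x + δ • u) u ≤ dot (v i) u :=
      hull_le_halfspace V u _ (fun ww hww => hvmax i ww hww (sgl j) (sgl_mem_orth j))
        _ hcP
    rw [dot_add_left, dot_smul_left] at hbound
    have hself := dot_self_pos hu0
    have := mul_pos hδ hself
    rw [dot_sub_left]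
    linarith
  -- the reference simplex
  set Δ : Set (Fin d → ℝ) := orth d ∩ {y | ∑ k, y k ≤ 1} with hΔdef
  have hΔfin : volume Δ ≠ ⊤ := by
    have hsub : Δ ⊆ Set.pi univ fun _ : Fin d => Icc (0 : ℝ) 1 := by
      rintro y ⟨hy1, hy2⟩
      rw [mem_pi]
      intro k _
      exact ⟨hy1 k, le_trans
        (Finset.single_le_sum (fun m _ => hy1 m) (Finset.mem_univ k)) hy2⟩
    have hb : volume Δ ≤ volume (Set.pi univ fun _ : Fin d => Icc (0 : ℝ) 1) :=
      measure_mono hsub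
    rw [volume_pi_pi] at hb
    simp only [Real.volume_Icc, sub_zero, ENNReal.ofReal_one, Finset.prod_const_one] at hb
    exact ne_top_of_le_ne_top ENNReal.one_ne_top hb
  set K : ℝ := (volume Δ).toReal with hKdef
  have hK0 : 0 ≤ K := ENNReal.toReal_nonneg
  set D : ι → ℝ := fun i => |LinearMap.det ((E i : (Fin d → ℝ) →ₗ[ℝ] (Fin d → ℝ)))| with hDdef
  refine ⟨∑ i : ι, MvPolynomial.C (K * D i) *
      ∏ i' ∈ Finset.univ.erase i, ∏ j, L i' j,
    ∏ i : ι, ∏ j, L i j, ?_, ?_⟩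
  · intro x hx
    rw [map_prod]
    refine ne_of_gt (Finset.prod_pos fun i _ => ?_)
    rw [map_prod]
    exact Finset.prod_pos fun j _ => hLpos x hx i j
  · intro x hx
    set Q : Set (Fin d → ℝ) := {u | ∀ c ∈ P, ∑ k, (c k - x k) * u k ≤ 1} with hQdef
    set T : ι → Fin d → ℝ := fun i j => dot (v i - x) (w i j) with hTdef
    have hLT : ∀ i j, MvPolynomial.eval x (L i j) = T i j := fun i j => hLeval x i j
    have hTpos : ∀ i j, 0 < T i j := by
      intro i j
      rw [← hLT]
      exact hLpos x hx i j
    have hD0 : ∀ i, 0 ≤ D i := by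
      intro i
      simp only [hDdef]
      exact abs_nonneg _
    -- description of the pieces of the polar body
    have hQσ : ∀ i : ι, Q ∩ (⇑(E i) '' orth d)
        = ⇑(E i) '' (orth d ∩ {y | ∑ j, T i j * y j ≤ 1}) := by
      intro i
      have hviP : v i ∈ P := subset_convexHull ℝ (V : Set (Fin d → ℝ)) (hvV i)
      have hpre : {y : Fin d → ℝ | ∑ j, T i j * y j ≤ 1}
          = ⇑(E i) ⁻¹' {u | dot (v i - x) u ≤ 1} := by
        ext y
        simp only [mem_setOf_eq, mem_preimage]
        rw [show (E i) y = ((E i : (Fin d → ℝ) →ₗ[ℝ] (Fin d → ℝ))) y from rfl, dot_map]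
        exact Iff.rfl
      rw [hpre, image_inter_preimage]
      ext u
      constructor
      · rintro ⟨huQ, huσ⟩
        exact ⟨huσ, huQ (v i) hviP⟩
      · rintro ⟨huσ, hu1⟩
        refine ⟨?_, huσ⟩
        intro c hc
        obtain ⟨y, hy, rfl⟩ := huσ
        have h1 : dot c (E i y) ≤ dot (v i) (E i y) :=
          hull_le_halfspace V (E i y) _ (fun ww hww => hvmax i ww hww y hy) c hc
        have h2 : dot (c - x) (E i y) ≤ dot (v i - x) (E i y) := by
          rw [dot_sub_left, dot_sub_left]
          linarith
        exact le_trans h2 hu1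
    -- each piece is a diagonal image of the reference simplex
    have hdiag : ∀ i : ι, orth d ∩ {y | ∑ j, T i j * y j ≤ 1}
        = ⇑(diagEquiv (fun j => (T i j)⁻¹) fun j => inv_ne_zero (hTpos i j).ne') '' Δ := by
      intro i
      ext z
      constructor
      · rintro ⟨hz1, hz2⟩
        refine ⟨fun j => T i j * z j, ⟨fun j => mul_nonneg (hTpos i j).le (hz1 j), hz2⟩, ?_⟩
        funext k
        show (T i k)⁻¹ * (T i k * z k) = z k
        rw [← mul_assoc, inv_mul_cancel₀ (hTpos i k).ne', one_mul]
      · rintro ⟨y, ⟨hy1, hy2⟩, rfl⟩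
        constructor
        · intro k
          show 0 ≤ (T i k)⁻¹ * y k
          exact mul_nonneg (inv_nonneg.mpr (hTpos i k).le) (hy1 k)
        · show ∑ j, T i j * ((T i j)⁻¹ * y j) ≤ 1
          calc ∑ j, T i j * ((T i j)⁻¹ * y j) = ∑ j, y j :=
                Finset.sum_congr rfl fun j _ => by
                  rw [← mul_assoc, mul_inv_cancel₀ (hTpos i j).ne', one_mul]
            _ ≤ 1 := hy2
    have hdetdiag : ∀ i : ι,
        LinearMap.det ((diagEquiv (fun j => (T i j)⁻¹) fun j => inv_ne_zero (hTpos i j).ne' :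
            (Fin d → ℝ) ≃ₗ[ℝ] (Fin d → ℝ)) : (Fin d → ℝ) →ₗ[ℝ] (Fin d → ℝ))
          = ∏ j, (T i j)⁻¹ := fun i => det_diagMap _
    -- volume of each piece
    have hvolσ : ∀ i : ι, volume (Q ∩ (⇑(E i) '' orth d))
        = ENNReal.ofReal (D i) * (ENNReal.ofReal (∏ j, (T i j)⁻¹) * volume Δ) := by
      intro i
      rw [hQσ i, hdiag i, vol_image, vol_image, hdetdiag i,
        abs_of_nonneg (Finset.prod_nonneg fun j _ => inv_nonneg.mpr (hTpos i j).le)]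
    -- measurability
    have hmQ : MeasurableSet Q := by
      have hQint : Q = ⋂ c ∈ P, {u : Fin d → ℝ | dot (c - x) u ≤ 1} := by
        ext u
        rw [mem_iInter₂]
        exact Iff.rfl
      have hcl : IsClosed Q := by
        rw [hQint]
        refine isClosed_biInter fun c hc => ?_
        have hco : Continuous fun u : Fin d → ℝ => dot (c - x) u :=
          (dotL (c - x)).continuous_of_finiteDimensional
        exact isClosed_le hco continuous_const
      exact hcl.measurableSet
    have hmσ : ∀ i : ι, MeasurableSet (⇑(E i) '' orth d) := by
      intro i
      have himg : ⇑(E i) '' orth d = ⇑(E i).symm ⁻¹' orth d := by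
        ext u
        constructor
        · rintro ⟨y, hy, rfl⟩
          show (E i).symm (E i y) ∈ orth d
          rw [LinearEquiv.symm_apply_apply]
          exact hy
        · intro hu
          exact ⟨(E i).symm u, hu, by rw [LinearEquiv.apply_symm_apply]⟩
      rw [himg]
      have hcont : Continuous ⇑(E i).symm :=
        ((E i).symm : (Fin d → ℝ) →ₗ[ℝ] (Fin d → ℝ)).continuous_of_finiteDimensional
      exact hcont.measurable isClosed_orth.measurableSet
    -- total volume as a sum over the pieces
    have hvolQ : volume Q = ∑ i : ι, volume (Q ∩ (⇑(E i) '' orth d)) := by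
      have hab : volume Q = volume (⋃ i, Q ∩ (⇑(E i) '' orth d)) := by
        refine le_antisymm ?_ (measure_mono (iUnion_subset fun i => inter_subset_left))
        have hsub : Q ⊆ (⋃ i, Q ∩ (⇑(E i) '' orth d)) ∪ (univ \ ⋃ i, ⇑(E i) '' orth d) := by
          intro u hu
          by_cases h : u ∈ ⋃ i, ⇑(E i) '' orth d
          · rw [mem_iUnion] at h
            obtain ⟨i, hi⟩ := h
            exact Or.inl (mem_iUnion.mpr ⟨i, hu, hi⟩)
          · exact Or.inr ⟨trivial, h⟩
        calc volume Q ≤ volume ((⋃ i, Q ∩ (⇑(E i) '' orth d))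
              ∪ (univ \ ⋃ i, ⇑(E i) '' orth d)) := measure_mono hsub
          _ ≤ volume (⋃ i, Q ∩ (⇑(E i) '' orth d))
              + volume (univ \ ⋃ i, ⇑(E i) '' orth d) := measure_union_le _ _
          _ = volume (⋃ i, Q ∩ (⇑(E i) '' orth d)) := by rw [hcov, add_zero]
      rw [hab, measure_iUnion₀ ?_ fun i => (hmQ.inter (hmσ i)).nullMeasurableSet,
        tsum_fintype]
      intro i j hij
      exact measure_mono_null (inter_subset_inter inter_subset_right inter_subset_right)
        (hdisj i j hij)
    -- assemble
    have hterm : ∀ i : ι, volume (Q ∩ (⇑(E i) '' orth d))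
        = ENNReal.ofReal (D i * ((∏ j, (T i j)⁻¹) * K)) := by
      intro i
      rw [hvolσ i, show volume Δ = ENNReal.ofReal K from (ENNReal.ofReal_toReal hΔfin).symm,
        ← ENNReal.ofReal_mul (Finset.prod_nonneg fun j _ => inv_nonneg.mpr (hTpos i j).le),
        ← ENNReal.ofReal_mul (hD0 i)]
    rw [hvolQ]
    have hqe : MvPolynomial.eval x (∏ i : ι, ∏ j, L i j) = ∏ i : ι, ∏ j, T i j := by
      rw [map_prod]
      exact Finset.prod_congr rfl fun i _ => by
        rw [map_prod]
        exact Finset.prod_congr rfl fun j _ => hLT i j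
    have hpe : MvPolynomial.eval x (∑ i : ι, MvPolynomial.C (K * D i) *
          ∏ i' ∈ Finset.univ.erase i, ∏ j, L i' j)
        = ∑ i : ι, K * D i * ∏ i' ∈ Finset.univ.erase i, ∏ j, T i' j := by
      rw [map_sum]
      refine Finset.sum_congr rfl fun i _ => ?_
      rw [map_mul, eval_C, map_prod]
      congr 1
      exact Finset.prod_congr rfl fun i' _ => by
        rw [map_prod]
        exact Finset.prod_congr rfl fun j _ => hLT i' j
    calc ∑ i : ι, volume (Q ∩ (⇑(E i) '' orth d))
        = ∑ i : ι, ENNReal.ofReal (D i * ((∏ j, (T i j)⁻¹) * K)) :=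
          Finset.sum_congr rfl fun i _ => hterm i
      _ = ENNReal.ofReal (∑ i : ι, D i * ((∏ j, (T i j)⁻¹) * K)) :=
          (ENNReal.ofReal_sum_of_nonneg fun i _ => mul_nonneg (hD0 i) (mul_nonneg
            (Finset.prod_nonneg fun j _ => inv_nonneg.mpr (hTpos i j).le) hK0)).symm
      _ = ENNReal.ofReal (MvPolynomial.eval x (∑ i : ι, MvPolynomial.C (K * D i) *
              ∏ i' ∈ Finset.univ.erase i, ∏ j, L i' j) /
            MvPolynomial.eval x (∏ i : ι, ∏ j, L i j)) := by
          congr 1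
          rw [hpe, hqe, Finset.sum_div]
          refine Finset.sum_congr rfl fun i _ => ?_
          have hSpos : ∀ i' : ι, 0 < ∏ j, T i' j := fun i' =>
            Finset.prod_pos fun j _ => hTpos i' j
          have hApos : 0 < ∏ i' ∈ Finset.univ.erase i, ∏ j, T i' j :=
            Finset.prod_pos fun i' _ => hSpos i'
          have hsplit : ∏ i' : ι, ∏ j, T i' j
              = (∏ j, T i j) * ∏ i' ∈ Finset.univ.erase i, ∏ j, T i' j :=
            (Finset.mul_prod_erase _ _ (Finset.mem_univ i)).symm
          rw [hsplit, Finset.prod_inv_distrib,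
            eq_div_iff (ne_of_gt (mul_pos (hSpos i) hApos))]
          have hS0 : (∏ j, T i j) ≠ 0 := ne_of_gt (hSpos i)
          field_simp
end

section
/- Let P₁, …, P_r ⊂ ℝ^d be convex polytopes, and suppose that for every λ = (λ₁,…,λ_r) with all λ_i > 0 the Minkowski sum λ₁P₁ + λ₂P₂ + ⋯ + λ_rP_r contains the origin in its interior. Then there exist polynomials p, q ∈ ℝ[λ₁,…,λ_r], with q nonvanishing on the open positive orthant, such that for all λ ∈ ℝ_{>0}^r, the Lebesgue volume of the polar body (λ₁P₁ + ⋯ + λ_rP_r)^∨ equals p(λ)/q(λ). -/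
open MeasureTheory Pointwise

namespace DMV

noncomputable section

/-- dot product on `Fin n → ℝ`. -/
def dotp {n : ℕ} (a u : Fin n → ℝ) : ℝ := ∑ j, a j * u j

variable {n : ℕ}

lemma dotp_neg_left (a u : Fin n → ℝ) : dotp (-a) u = - dotp a u := by
  simp [dotp]

lemma dotp_sub_left (a b u : Fin n → ℝ) : dotp (a - b) u = dotp a u - dotp b u := by
  simp [dotp, sub_mul, Finset.sum_sub_distrib]

lemma dotp_add_left (a b u : Fin n → ℝ) : dotp (a + b) u = dotp a u + dotp b u := by
  simp [dotp, add_mul, Finset.sum_add_distrib]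

lemma dotp_smul_left (c : ℝ) (a u : Fin n → ℝ) : dotp (c • a) u = c * dotp a u := by
  simp [dotp, Finset.mul_sum, mul_assoc]

lemma dotp_smul_right (c : ℝ) (a u : Fin n → ℝ) : dotp a (c • u) = c * dotp a u := by
  simp [dotp, Finset.mul_sum]
  exact Finset.sum_congr rfl fun j _ => by ring

lemma dotp_self_pos {a : Fin n → ℝ} (ha : a ≠ 0) : 0 < dotp a a := by
  have : ∃ j, a j ≠ 0 := by
    by_contra h
    push_neg at h
    exact ha (funext h)
  obtain ⟨j, hj⟩ := this
  refine Finset.sum_pos' (fun i _ => mul_self_nonneg _) ⟨j, Finset.mem_univ j, ?_⟩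
  exact mul_self_pos.2 hj

lemma continuous_dotp (a : Fin n → ℝ) : Continuous (fun u => dotp a u) := by
  unfold dotp
  exact continuous_finset_sum _ fun j _ => (continuous_const.mul (continuous_apply j))

lemma dotp_sum_left {ι : Type*} (s : Finset ι) (g : ι → Fin n → ℝ) (u : Fin n → ℝ) :
    dotp (∑ b ∈ s, g b) u = ∑ b ∈ s, dotp (g b) u := by
  simp [dotp, Finset.sum_mul]
  rw [Finset.sum_comm]

/-- the dot product functional as a linear map. -/
def dotL (a : Fin n → ℝ) : (Fin n → ℝ) →ₗ[ℝ] ℝ where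
  toFun u := dotp a u
  map_add' x y := by simp [dotp, mul_add, Finset.sum_add_distrib]
  map_smul' c x := by
    simp [dotp, Finset.mul_sum]
    exact Finset.sum_congr rfl fun j _ => by ring

lemma null_hyperplane {c : Fin n → ℝ} (hc : c ≠ 0) :
    volume {u : Fin n → ℝ | dotp c u = 0} = 0 := by
  have hker : {u : Fin n → ℝ | dotp c u = 0} = (LinearMap.ker (dotL c) : Set (Fin n → ℝ)) := by
    ext u; simp [LinearMap.mem_ker, dotL]; exact Iff.rfl
  have hne : LinearMap.ker (dotL c) ≠ ⊤ := by
    intro h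
    have : dotp c c = 0 := by
      have : c ∈ LinearMap.ker (dotL c) := h ▸ Submodule.mem_top
      exact LinearMap.mem_ker.1 this
    exact absurd this (ne_of_gt (dotp_self_pos hc))
  rw [hker]
  exact Measure.addHaar_submodule volume _ hne

def cone (B : Finset (Fin n → ℝ)) : Set (Fin n → ℝ) := {u | ∀ b ∈ B, 0 ≤ dotp b u}

lemma isClosed_cone (B : Finset (Fin n → ℝ)) : IsClosed (cone B) := by
  have : cone B = ⋂ b ∈ B, {u | 0 ≤ dotp b u} := by ext u; simp [cone]
  rw [this]
  exact isClosed_biInter fun b _ => isClosed_le continuous_const (continuous_dotp b)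

def piece (B : Finset (Fin n → ℝ)) (a : Fin n → ℝ) : Set (Fin n → ℝ) :=
  cone B ∩ {u | dotp a u ≤ 1}

lemma isClosed_piece (B : Finset (Fin n → ℝ)) (a : Fin n → ℝ) : IsClosed (piece B a) :=
  (isClosed_cone B).inter (isClosed_le (continuous_dotp a) continuous_const)

lemma measurableSet_piece (B : Finset (Fin n → ℝ)) (a : Fin n → ℝ) :
    MeasurableSet (piece B a) := (isClosed_piece B a).measurableSet

lemma bounded_piece {B : Finset (Fin n → ℝ)} {a : Fin n → ℝ}
    (h : ∀ u ∈ cone B, u ≠ 0 → 0 < dotp a u) :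
    Bornology.IsBounded (piece B a) := by
  obtain ⟨ε, hε, hK⟩ : ∃ ε, 0 < ε ∧ ∀ u ∈ cone B ∩ Metric.sphere (0 : Fin n → ℝ) 1, ε ≤ dotp a u := by
    by_cases hne : (cone B ∩ Metric.sphere (0 : Fin n → ℝ) 1).Nonempty
    · have hcpt : IsCompact (cone B ∩ Metric.sphere (0 : Fin n → ℝ) 1) :=
        (isCompact_sphere _ _).inter_left (isClosed_cone B)
      obtain ⟨u0, hu0, hmin⟩ := hcpt.exists_isMinOn hne ((continuous_dotp a).continuousOn)
      refine ⟨dotp a u0, ?_, fun u hu => hmin hu⟩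
      refine h u0 hu0.1 ?_
      intro h0
      have := hu0.2
      rw [h0] at this
      simp [Metric.mem_sphere] at this
    · exact ⟨1, one_pos, fun u hu => absurd ⟨u, hu⟩ hne⟩
  rw [Metric.isBounded_iff_subset_closedBall 0]
  refine ⟨ε⁻¹, fun u hu => ?_⟩
  rcases eq_or_ne u 0 with rfl | hu0
  · simp [Metric.mem_closedBall, inv_nonneg, le_of_lt hε]
  · have hnorm : (0:ℝ) < ‖u‖ := norm_pos_iff.2 hu0
    have hs : (‖u‖⁻¹ • u) ∈ cone B ∩ Metric.sphere (0 : Fin n → ℝ) 1 := by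
      constructor
      · intro b hb
        rw [dotp_smul_right]
        exact mul_nonneg (inv_nonneg.2 (le_of_lt hnorm)) (hu.1 b hb)
      · simp [Metric.mem_sphere, dist_eq_norm, norm_smul, abs_of_pos (inv_pos.2 hnorm),
          inv_mul_cancel₀ (ne_of_gt hnorm)]
    have hεle : ε ≤ ‖u‖⁻¹ * dotp a u := by
      have := hK _ hs
      rwa [dotp_smul_right] at this
    have h1 : ε * ‖u‖ ≤ dotp a u := by
      have := mul_le_mul_of_nonneg_right hεle (le_of_lt hnorm)
      calc ε * ‖u‖ ≤ ‖u‖⁻¹ * dotp a u * ‖u‖ := by linarith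
        _ = dotp a u := by field_simp
    have : ε * ‖u‖ ≤ 1 := le_trans h1 hu.2
    rw [Metric.mem_closedBall, dist_zero_right]
    rw [← mul_le_mul_iff_right₀ hε]
    calc ε * ‖u‖ ≤ 1 := this
      _ = ε * ε⁻¹ := by field_simp


lemma dotp_neg_right (a u : Fin n → ℝ) : dotp a (-u) = -dotp a u := by
  simp [dotp, Finset.sum_neg_distrib]

lemma dotp_add_right (a u v : Fin n → ℝ) : dotp a (u + v) = dotp a u + dotp a v := by
  simp [dotp, mul_add, Finset.sum_add_distrib]

lemma dotp_sub_right (a u v : Fin n → ℝ) : dotp a (u - v) = dotp a u - dotp a v := by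
  simp [dotp, mul_sub, Finset.sum_sub_distrib]

lemma dotp_single_right (j0 : Fin n) (b : Fin n → ℝ) :
    dotp b (Pi.single j0 1) = b j0 := by
  simp [dotp, Pi.single_apply, Finset.sum_ite_eq, mul_ite]

lemma dotp_single_left (j0 : Fin n) (v : Fin n → ℝ) :
    dotp (Pi.single j0 1) v = v j0 := by
  simp [dotp, Pi.single_apply, Finset.sum_ite_eq, ite_mul]

lemma dotp_update_left (b : Fin n → ℝ) (j0 : Fin n) (β : ℝ) (v : Fin n → ℝ) :
    dotp (Function.update b j0 β) v = dotp b v + (β - b j0) * v j0 := by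
  have h : Function.update b j0 β = b + (β - b j0) • (Pi.single j0 1 : Fin n → ℝ) := by
    funext m
    rcases eq_or_ne m j0 with rfl | hm
    · simp
    · simp [Function.update_of_ne hm, Pi.single_apply, hm]
  rw [h, dotp_add_left, dotp_smul_left, dotp_single_left]

lemma dotp_insertNth {n : ℕ} (j0 : Fin (n+1)) (a : Fin (n+1) → ℝ) (t : ℝ) (x : Fin n → ℝ) :
    dotp a (j0.insertNth t x) = a j0 * t + dotp (fun j => a (j0.succAbove j)) x := by
  rw [dotp, Fin.sum_univ_succAbove _ j0]
  simp [dotp]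

lemma integrable_indicator_of_bounded {S : Set (Fin n → ℝ)} (hS : MeasurableSet S)
    (hb : Bornology.IsBounded S) {f : (Fin n → ℝ) → ℝ} (hf : Continuous f) :
    Integrable (S.indicator f) := by
  obtain ⟨R, hR⟩ := hb.subset_closedBall 0
  refine IntegrableOn.integrable_indicator ?_ hS
  have h1 : IntegrableOn f (Metric.closedBall 0 R) :=
    hf.continuousOn.integrableOn_compact (isCompact_closedBall _ _)
  exact h1.mono_set hR

lemma gordan {B : Finset (Fin n → ℝ)}
    (h : (0 : Fin n → ℝ) ∉ convexHull ℝ (B : Set (Fin n → ℝ))) :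
    ∃ e : Fin n → ℝ, ∀ b ∈ B, 0 < dotp b e := by
  have hcl : IsClosed (convexHull ℝ (B : Set (Fin n → ℝ))) :=
    B.finite_toSet.isClosed_convexHull ℝ
  obtain ⟨f, u, hfu, hu0⟩ := geometric_hahn_banach_closed_point (convex_convexHull ℝ _) hcl h
  have hu : u < 0 := by simpa using hu0
  refine ⟨fun j => -f (Pi.single j 1), fun b hb => ?_⟩
  have hfb : f b < u := hfu b (subset_convexHull ℝ _ hb)
  have hrepr : f b = ∑ j, b j * f (Pi.single j 1) := by
    have hb' : b = ∑ j, b j • (Pi.single j 1 : Fin n → ℝ) := by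
      funext m
      simp [Finset.sum_apply, Pi.single_apply]
    calc f b = f (∑ j, b j • (Pi.single j 1 : Fin n → ℝ)) := by rw [← hb']
      _ = ∑ j, b j * f (Pi.single j 1) := by
          rw [map_sum]
          exact Finset.sum_congr rfl fun j _ => by simp
  have : dotp b (fun j => -f (Pi.single j 1)) = -f b := by
    rw [hrepr, dotp]
    simp [Finset.sum_neg_distrib]
  rw [this]
  linarith

lemma cone_null_of_mem_hull {B : Finset (Fin n → ℝ)} (h0 : (0 : Fin n → ℝ) ∉ B)
    (h : (0 : Fin n → ℝ) ∈ convexHull ℝ (B : Set (Fin n → ℝ))) :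
    volume (cone B) = 0 := by
  classical
  rw [Finset.convexHull_eq] at h
  obtain ⟨w, hw0, hw1, hcm⟩ := h
  rw [Finset.centerMass_eq_of_sum_1 _ _ hw1] at hcm
  obtain ⟨b0, hb0B, hb0⟩ : ∃ b0 ∈ B, w b0 ≠ 0 := by
    by_contra hc
    push_neg at hc
    rw [Finset.sum_eq_zero hc] at hw1
    exact one_ne_zero hw1.symm
  have hb0pos : 0 < w b0 := lt_of_le_of_ne (hw0 b0 hb0B) (Ne.symm hb0)
  have hsub : cone B ⊆ {u | dotp b0 u = 0} := by
    intro u hu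
    have hsum : ∑ b ∈ B, w b * dotp b u = 0 := by
      have : dotp (∑ b ∈ B, w b • (id b : Fin n → ℝ)) u = 0 := by rw [hcm]; simp [dotp]
      rw [dotp_sum_left] at this
      simpa [dotp_smul_left] using this
    have hz : ∀ b ∈ B, w b * dotp b u = 0 := by
      rw [Finset.sum_eq_zero_iff_of_nonneg
        (fun b hb => mul_nonneg (hw0 b hb) (hu b hb))] at hsum
      exact hsum
    have := hz b0 hb0B
    simp only [Set.mem_setOf_eq]
    rcases mul_eq_zero.1 this with h | h
    · exact absurd h hb0
    · exact h
  exact measure_mono_null hsub (null_hyperplane (fun hb => h0 (hb ▸ hb0B)))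

lemma integral_comp_linear (f : (Fin n → ℝ) →ₗ[ℝ] (Fin n → ℝ))
    (hdet : LinearMap.det f ≠ 0) (g : (Fin n → ℝ) → ℝ) (hg : Measurable g) :
    ∫ u, g u = |LinearMap.det f| * ∫ v, g (f v) := by
  have hfm : Measurable f := f.continuous_of_finiteDimensional.measurable
  have hmap := Real.map_linearMap_volume_pi_eq_smul_volume_pi hdet
  have h1 : ∫ v, g (f v) = ∫ u, g u ∂(Measure.map f volume) := by
    rw [integral_map hfm.aemeasurable hg.aestronglyMeasurable]
  rw [h1, hmap, integral_smul_measure, ENNReal.toReal_ofReal (abs_nonneg _), smul_eq_mul,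
    ← mul_assoc, abs_inv, mul_inv_cancel₀ (by simpa using hdet), one_mul]

lemma integral_slab (α M c : ℝ) (hα : 0 < α) (k : ℕ) :
    ∫ t : ℝ, Set.indicator {t : ℝ | M ≤ t ∧ α * t ≤ c} (fun t => (c - α*t)^k) t
      = (max 0 (c - α*M))^(k+1) / (α*(k+1)) := by
  have hset : {t : ℝ | M ≤ t ∧ α * t ≤ c} = Set.Icc M (c/α) := by
    ext t
    simp only [Set.mem_setOf_eq, Set.mem_Icc]
    constructor
    · rintro ⟨h1, h2⟩; exact ⟨h1, (le_div_iff₀ hα).2 (by linarith)⟩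
    · rintro ⟨h1, h2⟩; exact ⟨h1, by have := (le_div_iff₀ hα).1 h2; linarith⟩
  rw [hset, integral_indicator measurableSet_Icc]
  by_cases hMc : M ≤ c/α
  · have hcαM : 0 ≤ c - α*M := by
      have := (le_div_iff₀ hα).1 hMc
      linarith
    rw [max_eq_right hcαM]
    rw [integral_Icc_eq_integral_Ioc, ← intervalIntegral.integral_of_le hMc]
    have key : ∫ t in M..(c/α), (c - α*t)^k
        = (c - α*M)^(k+1) / (α*(k+1)) := by
      have hd : ∀ t ∈ Set.uIcc M (c/α), HasDerivAt (fun t => -(c - α*t)^(k+1) / (α*(k+1)))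
          ((c - α*t)^k) t := by
        intro t _
        have h1 : HasDerivAt (fun t : ℝ => c - α*t) (-α) t := by
          simpa using ((hasDerivAt_id t).const_mul α).const_sub c
        have h2 : HasDerivAt (fun t : ℝ => (c - α*t)^(k+1))
            ((k+1 : ℕ) * (c - α*t)^k * (-α)) t := h1.pow (k+1)
        have h3 := (h2.neg).div_const (α*(k+1))
        refine HasDerivAt.congr_deriv h3 ?_
        rw [div_eq_iff (mul_pos hα (by positivity)).ne']
        push_cast
        ring
      rw [intervalIntegral.integral_eq_sub_of_hasDerivAt hd
        (((continuous_const.sub (continuous_const.mul continuous_id)).pow k).intervalIntegrable _ _)]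
      have : c - α*(c/α) = 0 := by field_simp; ring
      rw [this]
      simp [zero_pow (Nat.succ_ne_zero k)]
      ring
    rw [key]
  · push_neg at hMc
    rw [Set.Icc_eq_empty (not_le.2 hMc)]
    have hneg : c - α*M < 0 := by
      have := (div_lt_iff₀ hα).1 hMc
      linarith
    rw [max_eq_left (le_of_lt hneg)]
    simp [zero_pow (Nat.succ_ne_zero k)]

def Av (w : Fin r → Fin n → ℝ) (l : Fin r → ℝ) : Fin n → ℝ := fun j => ∑ i, l i * w i j

lemma dotp_Av (w : Fin r → Fin n → ℝ) (l : Fin r → ℝ) (u : Fin n → ℝ) :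
    dotp (Av w l) u = ∑ i, l i * dotp (w i) u := by
  simp only [dotp, Av, Finset.sum_mul, Finset.mul_sum]
  rw [Finset.sum_comm]
  exact Finset.sum_congr rfl fun i _ => Finset.sum_congr rfl fun j _ => by ring

def Pos (l : Fin r → ℝ) : Prop := ∀ i, 0 < l i

def IsRat (F : (Fin r → ℝ) → ℝ) : Prop :=
  ∃ p q : MvPolynomial (Fin r) ℝ, (∀ l, Pos l → 0 < MvPolynomial.eval l q) ∧
    ∀ l, Pos l → F l = MvPolynomial.eval l p / MvPolynomial.eval l q

lemma IsRat.congr {F G : (Fin r → ℝ) → ℝ} (h : IsRat F) (hFG : ∀ l, Pos l → F l = G l) :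
    IsRat G := by
  obtain ⟨p, q, hq, hpq⟩ := h
  exact ⟨p, q, hq, fun l hl => (hFG l hl) ▸ hpq l hl⟩

lemma isRat_const (c : ℝ) : IsRat (fun _ : Fin r → ℝ => c) :=
  ⟨MvPolynomial.C c, 1, by simp, fun l _ => by simp⟩

lemma IsRat.sum {ι : Type*} (s : Finset ι) (f : ι → (Fin r → ℝ) → ℝ)
    (h : ∀ v ∈ s, IsRat (f v)) : IsRat (fun l => ∑ v ∈ s, f v l) := by
  classical
  induction s using Finset.induction with
  | empty => simpa using isRat_const 0
  | insert a s' hx ih =>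
    obtain ⟨p1, q1, hq1, hpq1⟩ := h a (Finset.mem_insert_self a s')
    obtain ⟨p2, q2, hq2, hpq2⟩ := ih (fun v hv => h v (Finset.mem_insert_of_mem hv))
    refine ⟨p1 * q2 + p2 * q1, q1 * q2, fun l hl => by
      simp only [MvPolynomial.eval_mul]
      exact mul_pos (hq1 l hl) (hq2 l hl), fun l hl => ?_⟩
    simp only []
    rw [Finset.sum_insert hx, hpq1 l hl]
    rw [show (∑ v ∈ s', f v l) = (fun l => ∑ v ∈ s', f v l) l from rfl, hpq2 l hl]
    have h1 := ne_of_gt (hq1 l hl)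
    have h2 := ne_of_gt (hq2 l hl)
    simp only [MvPolynomial.eval_add, MvPolynomial.eval_mul]
    rw [div_add_div _ _ h1 h2, div_eq_div_iff (by positivity) (by positivity)]
    ring

theorem crux (r : ℕ) : ∀ (n : ℕ) (k : ℕ) (B : Finset (Fin n → ℝ)) (w : Fin r → Fin n → ℝ),
    (∀ l, Pos l → ∀ u ∈ cone B, u ≠ 0 → 0 < dotp (Av w l) u) →
    IsRat (fun l => ∫ u, (piece B (Av w l)).indicator (fun u => (1 - dotp (Av w l) u)^k) u) := by
  intro n
  induction n with
  | zero =>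
    intro k B w _
    have hval : ∀ l : Fin r → ℝ,
        (∫ u, (piece B (Av w l)).indicator (fun u => (1 - dotp (Av w l) u)^k) u) = 1 := by
      intro l
      have hpiece : piece B (Av w l) = Set.univ := by
        ext u
        simp [piece, cone, dotp, Set.mem_setOf_eq, Finset.univ_eq_empty]
      rw [hpiece]
      calc (∫ u : Fin 0 → ℝ, Set.indicator Set.univ (fun u => (1 - dotp (Av w l) u)^k) u)
          = ∫ _ : Fin 0 → ℝ, (1:ℝ) := by
            congr 1
            funext u
            rw [Set.indicator_univ]
            simp [dotp, Finset.univ_eq_empty]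
        _ = 1 := by
            rw [integral_const]
            have : volume (Set.univ : Set (Fin 0 → ℝ)) = 1 := by
              rw [MeasureTheory.volume_pi, MeasureTheory.Measure.pi_univ]
              simp
            rw [measureReal_def, this]
            simp
    exact (isRat_const 1).congr (fun l _ => (hval l).symm)
  | succ n ih =>
    intro k B w hpos
    classical
    have hcone0 : cone (B.erase 0) = cone B := by
      ext u
      constructor
      · intro h b hb
        rcases eq_or_ne b 0 with rfl | hb0
        · simp [dotp]
        · exact h b (Finset.mem_erase.2 ⟨hb0, hb⟩)
      · intro h b hb
        exact h b (Finset.mem_erase.1 hb).2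
    by_cases hhull : (0 : Fin (n+1) → ℝ) ∈ convexHull ℝ ((B.erase 0 : Finset (Fin (n+1) → ℝ)) : Set (Fin (n+1) → ℝ))
    · -- degenerate case : the cone is a null set
      have hnull : volume (cone B) = 0 := by
        rw [← hcone0]
        exact cone_null_of_mem_hull (Finset.notMem_erase _ _) hhull
      refine ⟨0, 1, by simp, fun l _ => ?_⟩
      have hb : ∀ᵐ u, u ∉ piece B (Av w l) :=
        measure_eq_zero_iff_ae_notMem.1 (measure_mono_null Set.inter_subset_left hnull)
      have hzero : (fun u => (piece B (Av w l)).indicator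
          (fun u => (1 - dotp (Av w l) u)^k) u) =ᵐ[volume] (fun _ => (0:ℝ)) := by
        filter_upwards [hb] with u hu
        simp [Set.indicator_of_notMem hu]
      show (∫ u, (piece B (Av w l)).indicator (fun u => (1 - dotp (Av w l) u)^k) u) = _
      rw [integral_congr_ae hzero]
      simp
    · obtain ⟨e, he⟩ := gordan hhull
      have hB0ne : (B.erase 0).Nonempty := by
        rcases Finset.eq_empty_or_nonempty (B.erase 0) with h | h
        · exfalso
          have hconeU : cone B = Set.univ := by
            rw [← hcone0, h]
            ext u
            simp [cone]
          have hl1 : Pos (fun _ : Fin r => (1:ℝ)) := fun _ => one_pos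
          have hu0 : (Pi.single 0 1 : Fin (n+1) → ℝ) ≠ 0 := by
            intro hc
            have := congrFun hc 0
            simp at this
          have h1 := hpos _ hl1 (Pi.single 0 1) (by rw [hconeU]; trivial) hu0
          have h2 := hpos _ hl1 (-(Pi.single 0 1)) (by rw [hconeU]; trivial) (neg_ne_zero.2 hu0)
          rw [dotp_neg_right] at h2
          linarith
        · exact h
      have hene : e ≠ 0 := by
        obtain ⟨b, hb⟩ := hB0ne
        intro hc
        have := he b hb
        rw [hc] at this
        simp [dotp] at this
      obtain ⟨j0, hj0⟩ : ∃ j0, e j0 ≠ 0 := by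
        by_contra hc
        push_neg at hc
        exact hene (funext hc)
      have heC : e ∈ cone B := by
        rw [← hcone0]
        exact fun b hb => le_of_lt (he b hb)
      -- normalized generating set
      set B1 : Finset (Fin (n+1) → ℝ) := (B.erase 0).image (fun b => (dotp b e)⁻¹ • b) with hB1def
      have hB1ne : B1.Nonempty := hB0ne.image _
      have hB1e : ∀ b ∈ B1, dotp b e = 1 := by
        intro b hb
        rw [hB1def, Finset.mem_image] at hb
        obtain ⟨b', hb', rfl⟩ := hb
        rw [dotp_smul_left]
        field_simp [ne_of_gt (he b' hb')]
      have hconeB1 : cone B1 = cone B := by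
        rw [← hcone0]
        ext u
        constructor
        · intro h b hb
          have hbe := he b hb
          have h2 := h _ (Finset.mem_image_of_mem (fun b => (dotp b e)⁻¹ • b) hb)
          rw [dotp_smul_left] at h2
          nlinarith [inv_pos.2 hbe]
        · intro h b hb
          rw [hB1def, Finset.mem_image] at hb
          obtain ⟨b', hb', rfl⟩ := hb
          rw [dotp_smul_left]
          exact mul_nonneg (inv_nonneg.2 (le_of_lt (he b' hb'))) (h b' hb')
      -- the shear map L sending the j0 basis vector to e
      set c0 : Fin (n+1) → ℝ := e - Pi.single j0 1 with hc0def
      set Lmap : (Fin (n+1) → ℝ) →ₗ[ℝ] (Fin (n+1) → ℝ) :=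
        { toFun := fun v => v + (v j0) • c0
          map_add' := by
            intro a b
            funext m
            simp
            ring
          map_smul' := by
            intro s a
            funext m
            simp
            ring } with hLmapdef
      set Linv : (Fin (n+1) → ℝ) →ₗ[ℝ] (Fin (n+1) → ℝ) :=
        { toFun := fun v => v - (v j0 / e j0) • c0
          map_add' := by
            intro a b
            funext m
            simp
            ring
          map_smul' := by
            intro s a
            funext m
            simp
            ring } with hLinvdef
      have hLapp : ∀ v, Lmap v = v + (v j0) • c0 := fun _ => rfl
      have hIapp : ∀ v, Linv v = v - (v j0 / e j0) • c0 := fun _ => rfl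
      have hc0j0 : c0 j0 = e j0 - 1 := by simp [hc0def]
      have hLeq1 : Lmap.comp Linv = LinearMap.id := by
        refine LinearMap.ext fun v => ?_
        funext m
        rw [LinearMap.comp_apply, hLapp, hIapp]
        simp only [Pi.add_apply, Pi.sub_apply, Pi.smul_apply, smul_eq_mul, LinearMap.id_apply]
        rw [hc0j0]
        field_simp
        ring
      have hLeq2 : Linv.comp Lmap = LinearMap.id := by
        refine LinearMap.ext fun v => ?_
        funext m
        rw [LinearMap.comp_apply, hIapp, hLapp]
        simp only [Pi.add_apply, Pi.sub_apply, Pi.smul_apply, smul_eq_mul, LinearMap.id_apply]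
        rw [hc0j0]
        field_simp
        ring
      have hdet : LinearMap.det Lmap ≠ 0 := by
        have hunit : IsUnit (LinearMap.det ((LinearEquiv.ofLinear Lmap Linv hLeq1 hLeq2 :
            (Fin (n+1) → ℝ) ≃ₗ[ℝ] (Fin (n+1) → ℝ)) : (Fin (n+1) → ℝ) →ₗ[ℝ] (Fin (n+1) → ℝ))) :=
          LinearEquiv.isUnit_det' _
        exact hunit.ne_zero
      have hLinj : ∀ v, Lmap v = 0 → v = 0 := by
        intro v hv
        have := congrArg Linv hv
        rwa [← LinearMap.comp_apply, hLeq2, LinearMap.id_apply, map_zero] at this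
      -- transpose identities
      have hdotL : ∀ (b : Fin (n+1) → ℝ) v, dotp b (Lmap v) = dotp b v + v j0 * (dotp b e - b j0) := by
        intro b v
        rw [hLapp, dotp_add_right, dotp_smul_right, hc0def, dotp_sub_right, dotp_single_right]
      have hdotLup : ∀ (b : Fin (n+1) → ℝ) v,
          dotp b (Lmap v) = dotp (Function.update b j0 (dotp b e)) v := by
        intro b v
        rw [hdotL, dotp_update_left]
        ring
      set w' : Fin r → Fin (n+1) → ℝ := fun i => Function.update (w i) j0 (dotp (w i) e) with hw'def
      have hAvw' : ∀ l v, dotp (Av w l) (Lmap v) = dotp (Av w' l) v := by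
        intro l v
        rw [hdotLup]
        congr 1
        funext m
        rcases eq_or_ne m j0 with rfl | hm
        · rw [Function.update_self]
          rw [dotp_Av]
          simp [Av, hw'def, Function.update_self]
        · rw [Function.update_of_ne hm]
          simp [Av, hw'def, Function.update_of_ne hm]
      set B1' : Finset (Fin (n+1) → ℝ) := B1.image (fun b => Function.update b j0 1) with hB1'def
      have hpieceL : ∀ l v, (Lmap v ∈ piece B1 (Av w l)) ↔ v ∈ piece B1' (Av w' l) := by
        intro l v
        simp only [piece, cone, Set.mem_inter_iff, Set.mem_setOf_eq]
        constructor
        · rintro ⟨h1, h2⟩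
          refine ⟨?_, by rwa [← hAvw' l v]⟩
          intro b' hb'
          rw [hB1'def, Finset.mem_image] at hb'
          obtain ⟨b, hb, rfl⟩ := hb'
          have h3 := h1 b hb
          rw [hdotLup b v, hB1e b hb] at h3
          exact h3
        · rintro ⟨h1, h2⟩
          refine ⟨?_, by rwa [hAvw' l v]⟩
          intro b hb
          rw [hdotLup b v, hB1e b hb]
          exact h1 _ (Finset.mem_image_of_mem _ hb)
      have hpos' : ∀ l, Pos l → ∀ v ∈ cone B1', v ≠ 0 → 0 < dotp (Av w' l) v := by
        intro l hl v hv hv0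
        rw [← hAvw']
        refine hpos l hl (Lmap v) ?_ ?_
        · rw [← hconeB1]
          intro b hb
          rw [hdotLup b _, hB1e b hb]
          exact hv _ (Finset.mem_image_of_mem _ hb)
        · intro hc
          exact hv0 (hLinj v hc)
      -- slicing data
      set wπ : Fin r → Fin n → ℝ := fun i j => w i (j0.succAbove j) with hwpi
      set N : Finset (Fin n → ℝ) := B1.image (fun b j => -b (j0.succAbove j)) with hNdef
      have hNne : N.Nonempty := hB1ne.image _
      set α : (Fin r → ℝ) → ℝ := fun l => dotp (Av w l) e with hαdef
      have hαpos : ∀ l, Pos l → 0 < α l := fun l hl => hpos l hl e heC hene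
      set Mx : (Fin n → ℝ) → ℝ := fun x => N.sup' hNne (fun v => dotp v x) with hMxdef
      have hAvS : ∀ l, α l = ∑ i, l i * dotp (w i) e := fun l => dotp_Av w l e
      have hMxx : ∀ x, Mx x = N.sup' hNne fun v => dotp v x := fun _ => rfl
      have hAvins : ∀ l t x, dotp (Av w' l) (j0.insertNth t x) = α l * t + dotp (Av wπ l) x := by
        intro l t x
        rw [dotp_insertNth]
        congr 1
        · congr 1
          rw [hAvS]
          simp [Av, hw'def]
        · congr 1
          funext j
          simp [Av, hw'def, Function.update_of_ne (Fin.succAbove_ne j0 j), hwpi]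
      have hsuccup : ∀ b : Fin (n+1) → ℝ,
          (fun j => Function.update b j0 1 (j0.succAbove j)) = fun j => b (j0.succAbove j) := by
        intro b
        funext j
        exact Function.update_of_ne (Fin.succAbove_ne j0 j) _ _
      have hnegdot : ∀ (b : Fin (n+1) → ℝ) (x : Fin n → ℝ),
          dotp (fun j => -b (j0.succAbove j)) x = - dotp (fun j => b (j0.succAbove j)) x := by
        intro b x
        rw [show (fun j => -b (j0.succAbove j)) = -(fun j => b (j0.succAbove j)) from rfl,
          dotp_neg_left]
      have hmem : ∀ l t x, (j0.insertNth t x ∈ piece B1' (Av w' l)) ↔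
          (Mx x ≤ t ∧ α l * t ≤ 1 - dotp (Av wπ l) x) := by
        intro l t x
        simp only [piece, cone, Set.mem_inter_iff, Set.mem_setOf_eq]
        constructor
        · rintro ⟨h1, h2⟩
          constructor
          · rw [hMxx]
            refine Finset.sup'_le hNne _ (fun v hv => ?_)
            rw [hNdef, Finset.mem_image] at hv
            obtain ⟨b, hb, rfl⟩ := hv
            have h3 : 0 ≤ dotp (Function.update b j0 1) (j0.insertNth t x) :=
              h1 _ (Finset.mem_image_of_mem (fun b => Function.update b j0 1) hb)
            rw [dotp_insertNth, Function.update_self, hsuccup b, one_mul] at h3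
            rw [hnegdot]
            linarith
          · rw [hAvins] at h2
            linarith
        · rintro ⟨h1, h2⟩
          constructor
          · intro b' hb'
            rw [hB1'def, Finset.mem_image] at hb'
            obtain ⟨b, hb, rfl⟩ := hb'
            rw [dotp_insertNth, Function.update_self, hsuccup b, one_mul]
            have h6 : dotp (fun j => -b (j0.succAbove j)) x ≤ Mx x := by
              rw [hMxx]
              refine Finset.le_sup' (fun v => dotp v x) ?_
              rw [hNdef]
              exact Finset.mem_image_of_mem _ hb
            rw [hnegdot] at h6
            linarith
          · rw [hAvins]
            linarith
      -- recursive data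
      set Bv : (Fin n → ℝ) → Finset (Fin n → ℝ) := fun v => N.image (fun v' => v - v') with hBvdef
      set wv : (Fin n → ℝ) → Fin r → Fin n → ℝ := fun v i => wπ i + (dotp (w i) e) • v with hwvdef
      have hAvv : ∀ v l x, dotp (Av (wv v) l) x = dotp (Av wπ l) x + α l * dotp v x := by
        intro v l x
        have hsplit : Av (wv v) l = Av wπ l + α l • v := by
          funext j
          simp only [Av, hwvdef, Pi.add_apply, Pi.smul_apply, smul_eq_mul]
          rw [hAvS, Finset.sum_mul, ← Finset.sum_add_distrib]
          exact Finset.sum_congr rfl fun i _ => by ring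
        rw [hsplit, dotp_add_left, dotp_smul_left]
      have hposv : ∀ v ∈ N, ∀ l, Pos l → ∀ x ∈ cone (Bv v), x ≠ 0 → 0 < dotp (Av (wv v) l) x := by
        intro v hv l hl x hx hx0
        have hins : (j0.insertNth (dotp v x) x) ∈ cone B1' := by
          intro b' hb'
          rw [hB1'def, Finset.mem_image] at hb'
          obtain ⟨b, hb, rfl⟩ := hb'
          rw [dotp_insertNth, Function.update_self, hsuccup b, one_mul]
          have hvb : (fun j => -b (j0.succAbove j)) ∈ N := by
            rw [hNdef]
            exact Finset.mem_image_of_mem _ hb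
          have h7 := hx _ (by rw [hBvdef]; exact Finset.mem_image_of_mem _ hvb)
          rw [dotp_sub_left, hnegdot] at h7
          linarith
        have hins0 : (j0.insertNth (dotp v x) x : Fin (n+1) → ℝ) ≠ 0 := by
          obtain ⟨j, hj⟩ : ∃ j, x j ≠ 0 := by
            by_contra hc
            push_neg at hc
            exact hx0 (funext hc)
          intro hc
          have h10 := congrFun hc (j0.succAbove j)
          simp only [Fin.insertNth_apply_succAbove, Pi.zero_apply] at h10
          exact hj h10
        have h8 := hpos' l hl _ hins hins0
        rw [hAvins l (dotp v x) x] at h8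
        rw [hAvv]
        linarith
      have hcont : ∀ (m k' : ℕ) (a : Fin m → ℝ), Continuous fun x : Fin m → ℝ => (1 - dotp a x)^k' :=
        fun m k' a => (continuous_const.sub (continuous_dotp a)).pow k'
      -- measurable equivalence splitting off coordinate j0
      set Ψ : (Fin (n+1) → ℝ) ≃ᵐ ℝ × (Fin n → ℝ) :=
        MeasurableEquiv.piFinSuccAbove (fun _ : Fin (n+1) => ℝ) j0 with hΨdef
      have hΨmp : MeasurePreserving Ψ.symm
          ((volume : Measure ℝ).prod (volume : Measure (Fin n → ℝ))) volume :=
        (volume_preserving_piFinSuccAbove (fun _ : Fin (n+1) => ℝ) j0).symm _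
      have hΨsymm : ∀ (t : ℝ) (x : Fin n → ℝ), Ψ.symm (t, x) = j0.insertNth t x := by
        intro t x
        rfl
      -- the per-parameter computation
      have hchain : ∀ l, Pos l →
          (∫ u, (piece B (Av w l)).indicator (fun u => (1 - dotp (Av w l) u)^k) u)
            = |LinearMap.det Lmap| * ((α l * ((k:ℝ)+1))⁻¹ *
              ∑ v ∈ N, ∫ x, (piece (Bv v) (Av (wv v) l)).indicator
                (fun x => (1 - dotp (Av (wv v) l) x)^(k+1)) x) := by
        intro l hl
        set g : (Fin (n+1) → ℝ) → ℝ :=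
          (piece B1' (Av w' l)).indicator (fun v => (1 - dotp (Av w' l) v)^k) with hgdef
        have hmg : Measurable ((piece B1 (Av w l)).indicator (fun u => (1 - dotp (Av w l) u)^k)) :=
          ((hcont _ k _).measurable).indicator (measurableSet_piece _ _)
        have step0 : piece B (Av w l) = piece B1 (Av w l) := by
          unfold piece
          rw [hconeB1]
        have step1 : (∫ u, (piece B1 (Av w l)).indicator (fun u => (1 - dotp (Av w l) u)^k) u)
            = |LinearMap.det Lmap| * ∫ v, (piece B1 (Av w l)).indicator
                (fun u => (1 - dotp (Av w l) u)^k) (Lmap v) :=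
          integral_comp_linear Lmap hdet _ hmg
        have step2 : ∀ v, (piece B1 (Av w l)).indicator
            (fun u => (1 - dotp (Av w l) u)^k) (Lmap v) = g v := by
          intro v
          by_cases hv : v ∈ piece B1' (Av w' l)
          · rw [hgdef, Set.indicator_of_mem hv, Set.indicator_of_mem ((hpieceL l v).2 hv), hAvw']
          · rw [hgdef, Set.indicator_of_notMem hv,
              Set.indicator_of_notMem (fun hc => hv ((hpieceL l v).1 hc))]
        have hgint : Integrable g := by
          rw [hgdef]
          exact integrable_indicator_of_bounded (measurableSet_piece _ _)
            (bounded_piece (fun u hu hu0 => hpos' l hl u hu hu0)) (hcont _ k _)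
        have h9 : Integrable (fun p : ℝ × (Fin n → ℝ) => g (Ψ.symm p)) (volume.prod volume) :=
          (integrable_map_equiv Ψ.symm g).1 (by rwa [hΨmp.map_eq])
        have step3 : (∫ v, g v) = ∫ p : ℝ × (Fin n → ℝ), g (Ψ.symm p) ∂(volume.prod volume) :=
          (hΨmp.integral_comp' g).symm
        have step4 : (∫ p : ℝ × (Fin n → ℝ), g (Ψ.symm p) ∂(volume.prod volume))
            = ∫ x : Fin n → ℝ, ∫ t : ℝ, g (Ψ.symm (t, x)) := integral_prod_symm _ h9
        have step5 : ∀ x : Fin n → ℝ, (∫ t : ℝ, g (Ψ.symm (t, x)))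
            = (max 0 ((1 - dotp (Av wπ l) x) - α l * Mx x))^(k+1) / (α l * ((k:ℝ)+1)) := by
          intro x
          have hg2 : ∀ t : ℝ, g (Ψ.symm (t, x)) = Set.indicator
              {t : ℝ | Mx x ≤ t ∧ α l * t ≤ (1 - dotp (Av wπ l) x)}
              (fun t => ((1 - dotp (Av wπ l) x) - α l * t)^k) t := by
            intro t
            rw [hgdef, hΨsymm t x]
            by_cases hmemt : j0.insertNth t x ∈ piece B1' (Av w' l)
            · have ht1 : t ∈ {t : ℝ | Mx x ≤ t ∧ α l * t ≤ (1 - dotp (Av wπ l) x)} :=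
                (hmem l t x).1 hmemt
              rw [Set.indicator_of_mem hmemt, Set.indicator_of_mem ht1, hAvins]
              ring_nf
            · have ht1 : t ∉ {t : ℝ | Mx x ≤ t ∧ α l * t ≤ (1 - dotp (Av wπ l) x)} :=
                fun hc => hmemt ((hmem l t x).2 hc)
              rw [Set.indicator_of_notMem hmemt, Set.indicator_of_notMem ht1]
          calc (∫ t : ℝ, g (Ψ.symm (t, x)))
              = ∫ t : ℝ, Set.indicator {t : ℝ | Mx x ≤ t ∧ α l * t ≤ (1 - dotp (Av wπ l) x)}
                  (fun t => ((1 - dotp (Av wπ l) x) - α l * t)^k) t :=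
                integral_congr_ae (Filter.Eventually.of_forall hg2)
            _ = (max 0 ((1 - dotp (Av wπ l) x) - α l * Mx x))^(k+1) / (α l * ((k:ℝ)+1)) :=
                integral_slab (α l) (Mx x) _ (hαpos l hl) k
        have hbadnull : volume (⋃ pp ∈ ((((N ×ˢ N).filter fun pp => pp.1 ≠ pp.2) :
            Finset ((Fin n → ℝ) × (Fin n → ℝ))) : Set ((Fin n → ℝ) × (Fin n → ℝ))),
            {x : Fin n → ℝ | dotp (pp.1 - pp.2) x = 0}) = 0 := by
          refine (measure_biUnion_null_iff (Finset.countable_toSet _)).2 ?_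
          intro pp hpp
          rw [Finset.mem_coe, Finset.mem_filter] at hpp
          exact null_hyperplane (sub_ne_zero.2 hpp.2)
        have haemem := measure_eq_zero_iff_ae_notMem.1 hbadnull
        have hae : (fun x : Fin n → ℝ => (max 0 ((1 - dotp (Av wπ l) x) - α l * Mx x))^(k+1))
            =ᵐ[volume] (fun x => ∑ v ∈ N, (piece (Bv v) (Av (wv v) l)).indicator
              (fun x => (1 - dotp (Av (wv v) l) x)^(k+1)) x) := by
          filter_upwards [haemem] with x hx
          obtain ⟨v0, hv0N, hv0⟩ := Finset.exists_mem_eq_sup' hNne (fun v => dotp v x)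
          have hM : Mx x = dotp v0 x := (hMxx x).trans hv0
          have hstrict : ∀ v ∈ N, v ≠ v0 → dotp v x < dotp v0 x := by
            intro v hv hne
            have hle : dotp v x ≤ dotp v0 x := by
              have h13 := Finset.le_sup' (fun v => dotp v x) hv
              rwa [hv0] at h13
            rcases lt_or_eq_of_le hle with h | h
            · exact h
            · exfalso
              apply hx
              have hpair : (v, v0) ∈ (N ×ˢ N).filter (fun pp => pp.1 ≠ pp.2) :=
                Finset.mem_filter.2 ⟨Finset.mem_product.2 ⟨hv, hv0N⟩, hne⟩
              refine Set.mem_biUnion (Finset.mem_coe.2 hpair) ?_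
              rw [Set.mem_setOf_eq, dotp_sub_left, h, sub_self]
          have hzero : ∀ v ∈ N, v ≠ v0 → (piece (Bv v) (Av (wv v) l)).indicator
              (fun x => (1 - dotp (Av (wv v) l) x)^(k+1)) x = 0 := by
            intro v hv hne
            refine Set.indicator_of_notMem ?_ _
            rintro ⟨hc, -⟩
            have h12 := hc (v - v0) (by rw [hBvdef]; exact Finset.mem_image_of_mem _ hv0N)
            rw [dotp_sub_left] at h12
            have := hstrict v hv hne
            linarith
          rw [Finset.sum_eq_single_of_mem v0 hv0N hzero]
          have harg : (1 - dotp (Av wπ l) x) - α l * Mx x = 1 - dotp (Av (wv v0) l) x := by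
            rw [hM, hAvv]
            ring
          rw [harg]
          by_cases hcond : dotp (Av (wv v0) l) x ≤ 1
          · have hmem0 : x ∈ piece (Bv v0) (Av (wv v0) l) := by
              constructor
              · intro b hb
                rw [hBvdef, Finset.mem_image] at hb
                obtain ⟨v', hv', rfl⟩ := hb
                rw [dotp_sub_left]
                have h14 : dotp v' x ≤ dotp v0 x := by
                  have h13 := Finset.le_sup' (fun v => dotp v x) hv'
                  rwa [hv0] at h13
                linarith
              · exact hcond
            rw [Set.indicator_of_mem hmem0, max_eq_right (by linarith)]
          · rw [Set.indicator_of_notMem (fun hc => hcond hc.2), max_eq_left (by linarith),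
              zero_pow (Nat.succ_ne_zero k)]
        have step6 : (∫ x : Fin n → ℝ, (max 0 ((1 - dotp (Av wπ l) x) - α l * Mx x))^(k+1))
            = ∑ v ∈ N, ∫ x, (piece (Bv v) (Av (wv v) l)).indicator
              (fun x => (1 - dotp (Av (wv v) l) x)^(k+1)) x := by
          rw [integral_congr_ae hae]
          exact integral_finset_sum _ (fun v hv => integrable_indicator_of_bounded
            (measurableSet_piece _ _) (bounded_piece (hposv v hv l hl)) (hcont _ _ _))
        rw [step0, step1]
        congr 1
        calc (∫ v, (piece B1 (Av w l)).indicator (fun u => (1 - dotp (Av w l) u)^k) (Lmap v))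
            = ∫ v, g v := integral_congr_ae (Filter.Eventually.of_forall step2)
          _ = ∫ x : Fin n → ℝ, ∫ t : ℝ, g (Ψ.symm (t, x)) := by rw [step3, step4]
          _ = ∫ x : Fin n → ℝ, (max 0 ((1 - dotp (Av wπ l) x) - α l * Mx x))^(k+1)
                / (α l * ((k:ℝ)+1)) :=
              integral_congr_ae (Filter.Eventually.of_forall step5)
          _ = (α l * ((k:ℝ)+1))⁻¹ *
                ∫ x : Fin n → ℝ, (max 0 ((1 - dotp (Av wπ l) x) - α l * Mx x))^(k+1) := by
              rw [← integral_const_mul]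
              exact integral_congr_ae (Filter.Eventually.of_forall (fun x => div_eq_inv_mul _ _))
          _ = (α l * ((k:ℝ)+1))⁻¹ * ∑ v ∈ N, ∫ x, (piece (Bv v) (Av (wv v) l)).indicator
                (fun x => (1 - dotp (Av (wv v) l) x)^(k+1)) x := by
              rw [step6]
      -- final assembly
      have hRatSum : IsRat (fun l => ∑ v ∈ N, ∫ x, (piece (Bv v) (Av (wv v) l)).indicator
          (fun x => (1 - dotp (Av (wv v) l) x)^(k+1)) x) :=
        IsRat.sum N _ (fun v hv => ih (k+1) (Bv v) (wv v) (hposv v hv))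
      obtain ⟨p, q, hq, hpq⟩ := hRatSum
      have hlin : ∀ l, MvPolynomial.eval l (∑ i, MvPolynomial.C (dotp (w i) e) * MvPolynomial.X i) = α l := by
        intro l
        rw [hAvS]
        rw [map_sum]
        simp only [MvPolynomial.eval_mul, MvPolynomial.eval_C, MvPolynomial.eval_X]
        exact Finset.sum_congr rfl fun i _ => mul_comm _ _
      refine ⟨MvPolynomial.C |LinearMap.det Lmap| * p,
        (MvPolynomial.C ((k:ℝ)+1) * (∑ i, MvPolynomial.C (dotp (w i) e) * MvPolynomial.X i)) * q,
        ?_, ?_⟩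
      · intro l hl
        simp only [MvPolynomial.eval_mul, MvPolynomial.eval_C, hlin l]
        have hk1 : (0:ℝ) < (k:ℝ)+1 := by positivity
        exact mul_pos (mul_pos hk1 (hαpos l hl)) (hq l hl)
      · intro l hl
        show (∫ u, (piece B (Av w l)).indicator (fun u => (1 - dotp (Av w l) u)^k) u) = _
        rw [hchain l hl]
        have hsum : (∑ v ∈ N, ∫ x, (piece (Bv v) (Av (wv v) l)).indicator
            (fun x => (1 - dotp (Av (wv v) l) x)^(k+1)) x)
            = MvPolynomial.eval l p / MvPolynomial.eval l q := hpq l hl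
        rw [hsum]
        simp only [MvPolynomial.eval_mul, MvPolynomial.eval_C, hlin l]
        have h1 : α l ≠ 0 := ne_of_gt (hαpos l hl)
        have h2 : MvPolynomial.eval l q ≠ 0 := ne_of_gt (hq l hl)
        have h3 : (k:ℝ)+1 ≠ 0 := by positivity
        rw [show |LinearMap.det Lmap| * ((α l * ((k:ℝ)+1))⁻¹ *
            (MvPolynomial.eval l p / MvPolynomial.eval l q))
          = (|LinearMap.det Lmap| * MvPolynomial.eval l p) /
            (((k:ℝ)+1) * α l * MvPolynomial.eval l q) from by
          simp only [div_eq_mul_inv, mul_inv]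
          ring]


lemma mem_setSum {E : Type*} [AddCommMonoid E] {ι : Type*} [DecidableEq ι]
    (s : Finset ι) (T : ι → Set E) (c : E) :
    c ∈ (∑ i ∈ s, T i) ↔ ∃ g : ι → E, (∀ i ∈ s, g i ∈ T i) ∧ c = ∑ i ∈ s, g i := by
  classical
  induction s using Finset.induction generalizing c with
  | empty =>
    simp only [Finset.sum_empty]
    constructor
    · intro hc
      exact ⟨fun _ => 0, fun i hi => absurd hi (Finset.notMem_empty i), by simpa using hc⟩
    · rintro ⟨g, -, rfl⟩
      simp
  | insert a s' ha ih =>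
    rw [Finset.sum_insert ha, Set.mem_add]
    constructor
    · rintro ⟨x, hx, y, hy, hxy⟩
      obtain ⟨g, hg, hyeq⟩ := (ih y).1 hy
      refine ⟨Function.update g a x, ?_, ?_⟩
      · intro i hi
        rcases Finset.mem_insert.1 hi with rfl | hi'
        · rwa [Function.update_self]
        · rw [Function.update_of_ne (fun hc : i = a => ha (hc ▸ hi'))]
          exact hg i hi'
      · rw [Finset.sum_insert ha, Function.update_self]
        have hs : ∑ i ∈ s', Function.update g a x i = ∑ i ∈ s', g i :=
          Finset.sum_congr rfl fun i hi =>
            Function.update_of_ne (fun hc : i = a => ha (hc ▸ hi)) _ _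
        rw [hs, ← hyeq, hxy]
    · rintro ⟨g, hg, hceq⟩
      exact ⟨g a, hg a (Finset.mem_insert_self a s'), ∑ i ∈ s', g i,
        (ih _).2 ⟨g, fun i hi => hg i (Finset.mem_insert_of_mem hi), rfl⟩,
        by rw [hceq, Finset.sum_insert ha]⟩

end

end DMV

open DMV

/-- The dual mixed volume of polytopes is a rational function: given convex polytopes
`P₁, …, P_r ⊂ ℝ^d` such that for all `λ` with positive entries the Minkowski sum
`λ₁P₁ + ⋯ + λ_rP_r` contains the origin in its interior, there are polynomials `p, q`
in `λ₁, …, λ_r`, with `q` nonvanishing on the open positive orthant, such that for all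
positive `λ` the Lebesgue volume of the polar body `(λ₁P₁ + ⋯ + λ_rP_r)^∨` equals
`p(λ)/q(λ)`. -/
theorem dual_mixed_volume_rational (d r : ℕ) (V : Fin r → Finset (Fin d → ℝ))
    (P : Fin r → Set (Fin d → ℝ))
    (hP : ∀ i, P i = convexHull ℝ ((V i : Set (Fin d → ℝ))))
    (h0 : ∀ l : Fin r → ℝ, (∀ i, 0 < l i) → (0 : Fin d → ℝ) ∈ interior (∑ i, l i • P i)) :
    ∃ p q : MvPolynomial (Fin r) ℝ,
      (∀ l : Fin r → ℝ, (∀ i, 0 < l i) → MvPolynomial.eval l q ≠ 0) ∧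
      ∀ l : Fin r → ℝ, (∀ i, 0 < l i) →
        volume {u : Fin d → ℝ | ∀ c ∈ (∑ i, l i • P i), ∑ k, c k * u k ≤ 1} =
          ENNReal.ofReal (MvPolynomial.eval l p / MvPolynomial.eval l q) := by
  classical
  have hl1 : Pos (fun _ : Fin r => (1:ℝ)) := fun _ => one_pos
  -- each vertex set is nonempty
  have hVne : ∀ i, (V i).Nonempty := by
    intro i
    rcases Finset.eq_empty_or_nonempty (V i) with h | h
    · exfalso
      have h2 : (0 : Fin d → ℝ) ∈ (∑ j, (1:ℝ) • P j) :=
        interior_subset (h0 _ hl1)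
      obtain ⟨g, hg, -⟩ := (mem_setSum Finset.univ (fun j => (1:ℝ) • P j) 0).1 h2
      have h3 := hg i (Finset.mem_univ i)
      rw [hP i, h, Finset.coe_empty, convexHull_empty] at h3
      simp at h3
    · exact h
  -- support function bound for members of the sum
  have hbound : ∀ (l : Fin r → ℝ), Pos l → ∀ c ∈ (∑ i, l i • P i), ∀ u : Fin d → ℝ,
      dotp c u ≤ ∑ i, l i * (V i).sup' (hVne i) (fun v => dotp v u) := by
    intro l hl c hc u
    obtain ⟨g, hg, rfl⟩ := (mem_setSum Finset.univ (fun i => l i • P i) c).1 hc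
    rw [dotp_sum_left]
    refine Finset.sum_le_sum fun i _ => ?_
    obtain ⟨x, hx, hxeq⟩ := hg i (Finset.mem_univ i)
    rw [← hxeq, dotp_smul_left]
    refine mul_le_mul_of_nonneg_left ?_ (le_of_lt (hl i))
    have hsub : convexHull ℝ ((V i : Set (Fin d → ℝ))) ⊆
        {y | dotp y u ≤ (V i).sup' (hVne i) (fun v => dotp v u)} := by
      refine convexHull_min ?_ (convex_halfSpace_le ?_ _)
      · intro v hv
        exact Finset.le_sup' (fun v => dotp v u) (Finset.mem_coe.1 hv)
      · exact ⟨fun a b => dotp_add_left a b u, fun s a => dotp_smul_left s a u⟩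
    have hx' : x ∈ convexHull ℝ ((V i : Set (Fin d → ℝ))) := by rwa [← hP i]
    exact hsub hx'
  -- strict positivity of the support function
  have hsup : ∀ (l : Fin r → ℝ), Pos l → ∀ u : Fin d → ℝ, u ≠ 0 →
      0 < ∑ i, l i * (V i).sup' (hVne i) (fun v => dotp v u) := by
    intro l hl u hu
    obtain ⟨ε, hε, hball⟩ : ∃ ε > 0, Metric.ball (0 : Fin d → ℝ) ε ⊆ (∑ i, l i • P i) := by
      have := h0 l hl
      rw [mem_interior_iff_mem_nhds, Metric.mem_nhds_iff] at this
      exact this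
    have hun : (0:ℝ) < ‖u‖ := norm_pos_iff.2 hu
    have hcmem : (ε/(2*‖u‖)) • u ∈ (∑ i, l i • P i) := by
      refine hball ?_
      rw [Metric.mem_ball, dist_zero_right, norm_smul]
      rw [Real.norm_eq_abs, abs_of_pos (by positivity)]
      rw [div_mul_eq_mul_div, mul_comm]
      rw [div_lt_iff₀ (by positivity)]
      nlinarith
    have h5 := hbound l hl _ hcmem u
    rw [dotp_smul_left] at h5
    have h6 : 0 < (ε/(2*‖u‖)) * dotp u u :=
      mul_pos (by positivity) (dotp_self_pos hu)
    linarith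
  -- the regions indexed by choices of maximizing vertices
  set Bf : (Fin r → Fin d → ℝ) → Finset (Fin d → ℝ) :=
    fun f => Finset.univ.biUnion (fun i => (V i).image (fun v => f i - v)) with hBfdef
  -- positivity hypothesis for each region
  have hposf : ∀ f ∈ Fintype.piFinset V, ∀ l, Pos l →
      ∀ u ∈ cone (Bf f), u ≠ 0 → 0 < dotp (Av f l) u := by
    intro f hf l hl u hu hu0
    have hfi : ∀ i, ∀ v ∈ V i, dotp v u ≤ dotp (f i) u := by
      intro i v hv
      have := hu (f i - v) (Finset.mem_biUnion.2 ⟨i, Finset.mem_univ i,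
        Finset.mem_image_of_mem _ hv⟩)
      rw [dotp_sub_left] at this
      linarith
    have h7 : ∑ i, l i * (V i).sup' (hVne i) (fun v => dotp v u)
        ≤ ∑ i, l i * dotp (f i) u := by
      refine Finset.sum_le_sum fun i _ => ?_
      refine mul_le_mul_of_nonneg_left ?_ (le_of_lt (hl i))
      exact Finset.sup'_le _ _ (hfi i)
    have h8 := hsup l hl u hu0
    rw [dotp_Av]
    linarith
  -- decomposition of the polar body
  have hdecomp : ∀ l, Pos l → {u : Fin d → ℝ | ∀ c ∈ (∑ i, l i • P i), dotp c u ≤ 1}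
      = ⋃ f ∈ Fintype.piFinset V, piece (Bf f) (Av f l) := by
    intro l hl
    ext u
    simp only [Set.mem_setOf_eq, Set.mem_iUnion, exists_prop]
    constructor
    · intro hu
      set f : Fin r → Fin d → ℝ :=
        fun i => ((V i).exists_mem_eq_sup' (hVne i) (fun v => dotp v u)).choose with hfdef
      have hfspec : ∀ i, f i ∈ V i ∧ (V i).sup' (hVne i) (fun v => dotp v u) = dotp (f i) u := by
        intro i
        obtain ⟨hmem, heq⟩ := ((V i).exists_mem_eq_sup' (hVne i) (fun v => dotp v u)).choose_spec
        exact ⟨hmem, heq⟩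
      refine ⟨f, Fintype.mem_piFinset.2 fun i => (hfspec i).1, ?_, ?_⟩
      · intro b hb
        rw [hBfdef, Finset.mem_biUnion] at hb
        obtain ⟨i, -, hb⟩ := hb
        rw [Finset.mem_image] at hb
        obtain ⟨v, hv, rfl⟩ := hb
        rw [dotp_sub_left]
        have h9 : dotp v u ≤ (V i).sup' (hVne i) (fun v => dotp v u) :=
          Finset.le_sup' (fun v => dotp v u) hv
        rw [(hfspec i).2] at h9
        linarith
      · have hcmem : (∑ i, l i • f i) ∈ (∑ i, l i • P i) := by
          refine (mem_setSum Finset.univ (fun i => l i • P i) _).2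
            ⟨fun i => l i • f i, fun i _ => ?_, rfl⟩
          exact Set.smul_mem_smul_set
            ((hP i) ▸ subset_convexHull ℝ _ (Finset.mem_coe.2 (hfspec i).1))
        have h10 := hu _ hcmem
        rw [dotp_sum_left] at h10
        show dotp (Av f l) u ≤ 1
        rw [show dotp (Av f l) u = ∑ i, dotp (l i • f i) u from by
          rw [dotp_Av]
          exact Finset.sum_congr rfl fun i _ => (dotp_smul_left _ _ _).symm]
        exact h10
    · rintro ⟨f, hf, hcone, hle⟩ c hc
      have hle' : dotp (Av f l) u ≤ 1 := hle
      have h11 := hbound l hl c hc u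
      have h12 : ∑ i, l i * (V i).sup' (hVne i) (fun v => dotp v u)
          ≤ dotp (Av f l) u := by
        rw [dotp_Av]
        refine Finset.sum_le_sum fun i _ => ?_
        refine mul_le_mul_of_nonneg_left ?_ (le_of_lt (hl i))
        refine Finset.sup'_le _ _ fun v hv => ?_
        have := hcone (f i - v) (Finset.mem_biUnion.2 ⟨i, Finset.mem_univ i,
          Finset.mem_image_of_mem _ hv⟩)
        rw [dotp_sub_left] at this
        linarith
      linarith
  -- rationality of each piece's volume, via the main induction
  have hrat : ∀ f ∈ Fintype.piFinset V, IsRat (fun l => ∫ u,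
      (piece (Bf f) (Av f l)).indicator (fun u => (1 - dotp (Av f l) u)^0) u) := by
    intro f hf
    exact crux r d 0 (Bf f) f (fun l hl u hu hu0 => hposf f hf l hl u hu hu0)
  have hratsum : IsRat (fun l => ∑ f ∈ Fintype.piFinset V, ∫ u,
      (piece (Bf f) (Av f l)).indicator (fun u => (1 - dotp (Av f l) u)^0) u) :=
    IsRat.sum _ _ hrat
  obtain ⟨p, q, hq, hpq⟩ := hratsum
  refine ⟨p, q, fun l hl => ne_of_gt (hq l hl), ?_⟩
  intro l hl
  have hl' : Pos l := hl
  -- each piece's volume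
  have hvol : ∀ f ∈ Fintype.piFinset V, volume (piece (Bf f) (Av f l))
      = ENNReal.ofReal (∫ u, (piece (Bf f) (Av f l)).indicator
          (fun u => (1 - dotp (Av f l) u)^0) u) := by
    intro f hf
    have hfin : volume (piece (Bf f) (Av f l)) ≠ ⊤ := by
      obtain ⟨R, hR⟩ := (bounded_piece (hposf f hf l hl')).subset_closedBall 0
      exact ne_of_lt (lt_of_le_of_lt (measure_mono hR)
        (isCompact_closedBall 0 R).measure_lt_top)
    have heq : (∫ u, (piece (Bf f) (Av f l)).indicator
        (fun u => (1 - dotp (Av f l) u)^0) u)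
        = (volume (piece (Bf f) (Av f l))).toReal := by
      simp only [pow_zero]
      rw [show ((piece (Bf f) (Av f l)).indicator (fun _ => (1:ℝ)))
          = (piece (Bf f) (Av f l)).indicator 1 from rfl]
      exact integral_indicator_one (measurableSet_piece _ _)
    rw [heq, ENNReal.ofReal_toReal hfin]
  -- the set in the statement
  have hsetK : {u : Fin d → ℝ | ∀ c ∈ (∑ i, l i • P i), ∑ k, c k * u k ≤ 1}
      = ⋃ f ∈ Fintype.piFinset V, piece (Bf f) (Av f l) := by
    rw [← hdecomp l hl']
    rfl
  rw [hsetK]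
  -- sum over the a.e.-disjoint pieces
  have hdisj : (↑(Fintype.piFinset V) : Set (Fin r → Fin d → ℝ)).Pairwise
      (Function.onFun (MeasureTheory.AEDisjoint volume) fun f => piece (Bf f) (Av f l)) := by
    intro f hf f' hf' hne
    have hi0 : ∃ i, f i ≠ f' i := Function.ne_iff.1 hne
    obtain ⟨i0, hi0⟩ := hi0
    refine measure_mono_null ?_ (null_hyperplane (c := f i0 - f' i0) (sub_ne_zero.2 hi0))
    rintro u ⟨hu1, hu2⟩
    have hfV : ∀ i, f i ∈ V i := Fintype.mem_piFinset.1 (Finset.mem_coe.1 hf)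
    have hf'V : ∀ i, f' i ∈ V i := Fintype.mem_piFinset.1 (Finset.mem_coe.1 hf')
    have h1 := hu1.1 (f i0 - f' i0) (Finset.mem_biUnion.2 ⟨i0, Finset.mem_univ i0,
      Finset.mem_image_of_mem _ (hf'V i0)⟩)
    have h2 := hu2.1 (f' i0 - f i0) (Finset.mem_biUnion.2 ⟨i0, Finset.mem_univ i0,
      Finset.mem_image_of_mem _ (hfV i0)⟩)
    rw [dotp_sub_left] at h1 h2
    rw [Set.mem_setOf_eq, dotp_sub_left]
    linarith
  rw [measure_biUnion_finset₀ hdisj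
    (fun f _ => (measurableSet_piece (Bf f) (Av f l)).nullMeasurableSet)]
  have hsum2 : ∑ f ∈ Fintype.piFinset V, volume (piece (Bf f) (Av f l))
      = ENNReal.ofReal (∑ f ∈ Fintype.piFinset V, ∫ u,
          (piece (Bf f) (Av f l)).indicator (fun u => (1 - dotp (Av f l) u)^0) u) := by
    rw [ENNReal.ofReal_sum_of_nonneg]
    · exact Finset.sum_congr rfl fun f hf => hvol f hf
    · intro f hf
      refine integral_nonneg ?_
      intro u
      refine Set.indicator_nonneg (fun u _ => ?_) u
      simp [pow_zero]
  rw [hsum2]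
  rw [show (∑ f ∈ Fintype.piFinset V, ∫ u,
      (piece (Bf f) (Av f l)).indicator (fun u => (1 - dotp (Av f l) u)^0) u)
    = MvPolynomial.eval l p / MvPolynomial.eval l q from hpq l hl']
end
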